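/- arXiv:1609.05397 — 5 statements merged into one kernel-verified Lean document; each statement's English description precedes it below -/
import Mathlib

section
/- Let c₀ > 0. There exists δ₀ = δ₀(c₀) > 0 such that for every δ ∈ (0, δ₀] the following holds: if φ : [0,∞) → ℝ is twice continuously differentiable, satisfies (1 − δ + φ)φ'' + (φ')² + (z/2)φ' = 0 on (0,∞), with φ(0) = 0, φ(z) → δ as z → ∞, and |φ(z)| ≤ c₀ δ for all z ≥ 0, then φ'(0) > 0. -/
open Set Filter Real

theorem stmt2 (c₀ : ℝ) (hc₀ : 0 < c₀) :
    ∃ δ₀ > (0:ℝ), ∀ δ : ℝ, 0 < δ → δ ≤ δ₀ →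
      ∀ φ : ℝ → ℝ, ContDiffOn ℝ 2 φ (Set.Ici 0) →
        (∀ z : ℝ, 0 < z →
          (1 - δ + φ z) * deriv (deriv φ) z + (deriv φ z)^2 + (z/2) * deriv φ z = 0) →
        φ 0 = 0 →
        Filter.Tendsto φ Filter.atTop (nhds δ) →
        (∀ z : ℝ, 0 ≤ z → |φ z| ≤ c₀ * δ) →
        0 < derivWithin φ (Set.Ici 0) 0 := by
  refine ⟨1 / (2 * (1 + c₀)), by positivity, ?_⟩
  intro δ hδ hδδ₀ φ hφ hode hφ0 hlim hbd
  -- basic bounds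
  have h2c : (0:ℝ) < 2 * (1 + c₀) := by positivity
  have hδc : δ * (1 + c₀) ≤ 1 / 2 := by
    have h := mul_le_mul_of_nonneg_right hδδ₀ h2c.le
    rw [one_div, inv_mul_cancel₀ h2c.ne'] at h
    nlinarith
  have hδ1 : δ < 1 := by nlinarith
  have hD : ∀ z : ℝ, 0 ≤ z → (1:ℝ)/2 ≤ 1 - δ + φ z := by
    intro z hz
    have h := abs_le.1 (hbd z hz)
    nlinarith [h.1]
  -- continuity of derivWithin on Ici 0
  have hfc : ContinuousOn (derivWithin φ (Set.Ici 0)) (Set.Ici 0) :=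
    hφ.continuousOn_derivWithin (uniqueDiffOn_Ici 0) (by norm_num)
  have hderiv_eq : ∀ z : ℝ, 0 < z → derivWithin φ (Set.Ici 0) z = deriv φ z :=
    fun z hz => derivWithin_of_mem_nhds (Ici_mem_nhds hz)
  have hφIoi : ContDiffOn ℝ 2 φ (Set.Ioi 0) := hφ.mono Set.Ioi_subset_Ici_self
  have hdφ : ContDiffOn ℝ 1 (deriv φ) (Set.Ioi 0) :=
    hφIoi.deriv_of_isOpen isOpen_Ioi (by norm_num)
  have hφdiff : DifferentiableOn ℝ φ (Set.Ioi 0) := hφIoi.differentiableOn (by norm_num)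
  have hφz : ∀ z : ℝ, 0 < z → HasDerivAt φ (deriv φ z) z := fun z hz =>
    (hφdiff.differentiableAt (Ioi_mem_nhds hz)).hasDerivAt
  have hdφz : ∀ z : ℝ, 0 < z → HasDerivAt (deriv φ) (deriv (deriv φ) z) z := fun z hz =>
    ((hdφ.differentiableOn (by norm_num)).differentiableAt (Ioi_mem_nhds hz)).hasDerivAt
  -- the integrating factor
  set g : ℝ → ℝ := fun z => z / (2 * (1 - δ + φ (max z 0))) with hg_def
  have hden_pos : ∀ z : ℝ, 0 < 2 * (1 - δ + φ (max z 0)) := by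
    intro z
    have := hD (max z 0) (le_max_right z 0)
    linarith
  have hgc : Continuous g := by
    apply continuous_id.div
    · exact continuous_const.mul (continuous_const.add
        (hφ.continuousOn.comp_continuous (continuous_id.max continuous_const)
          (fun z => le_max_right z 0)))
    · exact fun z => (hden_pos z).ne'
  set G : ℝ → ℝ := fun z => ∫ t in (0:ℝ)..z, g t with hG_def
  have hG : ∀ z : ℝ, HasDerivAt G (g z) z := fun z =>
    intervalIntegral.integral_hasDerivAt_right (hgc.intervalIntegrable 0 z)
      (hgc.stronglyMeasurableAtFilter _ _) hgc.continuousAt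
  have hGcont : Continuous G := continuous_iff_continuousAt.2 fun z => (hG z).differentiableAt.continuousAt
  have hG0 : G 0 = 0 := intervalIntegral.integral_same
  -- v and its ODE
  set v : ℝ → ℝ := fun z => (1 - δ + φ z) * derivWithin φ (Set.Ici 0) z with hv_def
  have hvc : ContinuousOn v (Set.Ici 0) :=
    (continuousOn_const.add hφ.continuousOn).mul hfc
  have hv' : ∀ z : ℝ, 0 < z → HasDerivAt v (-(g z * v z)) z := by
    intro z hz
    have h1 : HasDerivAt (fun y => 1 - δ + φ y) (deriv φ z) z := (hφz z hz).const_add _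
    have hmul := h1.mul (hdφz z hz)
    have hveq : v =ᶠ[nhds z] fun y => (1 - δ + φ y) * deriv φ y := by
      filter_upwards [Ioi_mem_nhds hz] with y hy
      simp [hv_def, hderiv_eq y hy]
    have hdz : HasDerivAt v
        (deriv φ z * deriv φ z + (1 - δ + φ z) * deriv (deriv φ) z) z :=
      hmul.congr_of_eventuallyEq hveq
    convert hdz using 1
    have hode' := hode z hz
    have hDz : (1:ℝ)/2 ≤ 1 - δ + φ z := hD z hz.le
    have hne : 1 - δ + φ z ≠ 0 := by linarith
    have hmax : max z 0 = z := max_eq_left hz.le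
    simp only [hg_def, hv_def, hmax, hderiv_eq z hz]
    field_simp
    nlinarith [hode']
  -- w = v * exp G is constant on Ici 0
  set w : ℝ → ℝ := fun z => v z * Real.exp (G z) with hw_def
  have hw' : ∀ z : ℝ, 0 < z → HasDerivAt w 0 z := by
    intro z hz
    have : HasDerivAt w (-(g z * v z) * Real.exp (G z) + v z * (Real.exp (G z) * g z)) z := (hv' z hz).mul ((hG z).exp)
    convert this using 1
    ring
  have hwc : ContinuousOn w (Set.Ici 0) :=
    hvc.mul (hGcont.rexp.continuousOn)
  have hwconst : ∀ b : ℝ, 0 ≤ b → w b = w 0 := by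
    intro b hb
    rcases hb.eq_or_lt with rfl | hb
    · rfl
    have key : ∀ ε : ℝ, 0 < ε → ε ≤ b → w b = w ε := by
      intro ε hε hεb
      have := constant_of_has_deriv_right_zero
        (f := w) (a := ε) (b := b)
        (hwc.mono (Set.Icc_subset_Ici_self.trans (Set.Ici_subset_Ici.2 hε.le)))
        (fun x hx => ((hw' x (lt_of_lt_of_le hε hx.1)).hasDerivWithinAt))
      exact this b (Set.right_mem_Icc.2 hεb)
    have h1 : Tendsto w (nhdsWithin 0 (Set.Ioi 0)) (nhds (w 0)) :=
      (hwc 0 Set.self_mem_Ici).mono Set.Ioi_subset_Ici_self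
    have h2 : ∀ᶠ ε in nhdsWithin (0:ℝ) (Set.Ioi 0), w ε = w b := by
      filter_upwards [Ioc_mem_nhdsGT_of_mem ⟨le_refl (0:ℝ), hb⟩] with ε hε
      exact (key ε hε.1 hε.2).symm
    have h3 : Tendsto w (nhdsWithin 0 (Set.Ioi 0)) (nhds (w b)) :=
      Tendsto.congr' (by filter_upwards [h2] with ε hε; exact hε.symm) tendsto_const_nhds
    exact tendsto_nhds_unique h3 h1
  -- main argument
  by_contra hcon
  push_neg at hcon
  have hv0 : v 0 ≤ 0 := by
    have : v 0 = (1 - δ) * derivWithin φ (Set.Ici 0) 0 := by simp [hv_def, hφ0]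
    rw [this]
    nlinarith
  have hvz : ∀ z : ℝ, 0 ≤ z → v z ≤ 0 := by
    intro z hz
    have h := hwconst z hz
    simp only [hw_def, hG0, Real.exp_zero, mul_one] at h
    nlinarith [Real.exp_pos (G z), h]
  have hderiv_nonpos : ∀ x ∈ interior (Set.Ici (0:ℝ)), deriv φ x ≤ 0 := by
    intro x hx
    rw [interior_Ici] at hx
    have hxpos : (0:ℝ) < x := hx
    have hvx := hvz x hxpos.le
    have hDx := hD x hxpos.le
    rw [hv_def] at hvx
    simp only at hvx
    rw [hderiv_eq x hxpos] at hvx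
    nlinarith
  have hanti : AntitoneOn φ (Set.Ici 0) := by
    apply antitoneOn_of_deriv_nonpos (convex_Ici 0) hφ.continuousOn
    · rw [interior_Ici]; exact hφdiff
    · exact hderiv_nonpos
  have hle : ∀ᶠ z in atTop, φ z ≤ 0 := by
    filter_upwards [eventually_ge_atTop (0:ℝ)] with z hz
    have := hanti Set.self_mem_Ici hz hz
    rw [hφ0] at this
    exact this
  have : δ ≤ 0 := le_of_tendsto hlim hle
  linarith
end

section
/- Let δ > 0, set E(x,η) := e_δ(η/√x) and z := η/√x. For all integers m, l, k ≥ 0 and every p ∈ [2,∞] there is a constant C = C(m,l,k), independent of δ and of x, such that for all x ≥ 1: ‖ z^m ∂_η^l ∂_x^k ( E(x,η) − δ ) ‖_{L^p_η(0,∞)} ≤ C δ x^{−k − l/2 + 1/(2p)}, with the convention 1/(2p) = 0 when p = ∞. -/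
open Real MeasureTheory Filter Topology
open scoped ENNReal Polynomial

/-- The Gaussian front profile `e_δ(z) = (δ/√π) ∫₀^z e^{-t²/4} dt`. -/
noncomputable def eDelta (δ : ℝ) (z : ℝ) : ℝ :=
  (δ / Real.sqrt Real.pi) * ∫ t in (0:ℝ)..z, Real.exp (-t^2/4)

noncomputable def gg (z : ℝ) : ℝ := Real.exp (-z^2/4)

noncomputable def f0 (z : ℝ) : ℝ :=
  (Real.sqrt π)⁻¹ * (∫ t in (0:ℝ)..z, gg t) - 1

noncomputable def Dp (Q : ℝ[X]) : ℝ[X] :=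
  Q.derivative - Polynomial.C 2⁻¹ * (Polynomial.X * Q)

noncomputable def vP : ℕ → ℝ[X]
  | 0 => 0
  | 1 => Polynomial.C (-(2 * Real.sqrt π)⁻¹) * Polynomial.X
  | (k+2) => (-(((k+1 : ℕ) : ℝ))) • vP (k+1)
      - Polynomial.C 2⁻¹ * Polynomial.X * Dp (vP (k+1))

noncomputable def phi : ℕ → ℝ → ℝ
  | 0 => f0
  | (k+1) => fun z => (vP (k+1)).eval z * gg z

noncomputable def pd : ℕ → ℝ[X]
  | 0 => Polynomial.C (Real.sqrt π)⁻¹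
  | (k+1) => Dp (vP (k+1))

lemma contDiff_polyEval (Q : ℝ[X]) : ContDiff ℝ (⊤:ℕ∞) (fun z : ℝ => Q.eval z) := by
  induction Q using Polynomial.induction_on' with
  | add p q hp hq => simpa [Polynomial.eval_add] using hp.add hq
  | monomial n a =>
      simpa [Polynomial.eval_monomial] using (contDiff_const.mul (contDiff_id.pow n))

lemma contDiff_gg : ContDiff ℝ (⊤:ℕ∞) gg := by
  have : ContDiff ℝ (⊤:ℕ∞) (fun z : ℝ => -z^2/4) :=
    ((contDiff_id.pow 2).neg).div_const 4
  exact this.exp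

lemma continuous_gg : Continuous gg := contDiff_gg.continuous

lemma hasDerivAt_gg (z : ℝ) : HasDerivAt gg (-(z/2) * gg z) z := by
  have h1 : HasDerivAt (fun z : ℝ => -z^2/4) (-(z/2)) z := by
    have := ((hasDerivAt_pow 2 z).div_const 4).neg
    refine (this.congr_deriv ?_).congr_of_eventuallyEq (Filter.Eventually.of_forall fun w => ?_)
    · norm_num; ring
    · show -w^2/4 = -(w^2/4); ring
  unfold gg; simpa [mul_comm] using h1.exp

lemma hasDerivAt_polyGauss (Q : ℝ[X]) (z : ℝ) :
    HasDerivAt (fun z => Q.eval z * gg z) ((Dp Q).eval z * gg z) z := by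
  have h := (Q.hasDerivAt z).mul (hasDerivAt_gg z)
  refine h.congr_deriv ?_
  simp [Dp, gg]
  ring

lemma hasDerivAt_f0 (z : ℝ) : HasDerivAt f0 ((pd 0).eval z * gg z) z := by
  have hint : HasDerivAt (fun z => ∫ t in (0:ℝ)..z, gg t) (gg z) z := by
    exact intervalIntegral.integral_hasDerivAt_right
      (continuous_gg.intervalIntegrable _ _)
      (continuous_gg.stronglyMeasurableAtFilter _ _)
      continuous_gg.continuousAt
  have := (hint.const_mul ((Real.sqrt π)⁻¹)).sub_const 1
  unfold f0; simpa [pd] using this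

lemma hasDerivAt_phi (k : ℕ) (z : ℝ) :
    HasDerivAt (phi k) ((pd k).eval z * gg z) z := by
  cases k with
  | zero => exact hasDerivAt_f0 z
  | succ k => exact hasDerivAt_polyGauss (vP (k+1)) z

lemma phi_succ (k : ℕ) (z : ℝ) :
    phi (k+1) z = -(k : ℝ) * phi k z - z/2 * ((pd k).eval z * gg z) := by
  cases k with
  | zero => simp [phi, vP, pd]; ring
  | succ k =>
    simp only [phi, vP, pd, Polynomial.eval_sub, Polynomial.eval_smul, Polynomial.eval_mul,
      Polynomial.eval_C, Polynomial.eval_X, smul_eq_mul]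
    push_cast
    ring

lemma contDiff_phi (k : ℕ) : ContDiff ℝ (⊤:ℕ∞) (phi k) := by
  cases k with
  | zero =>
    rw [show phi 0 = f0 from rfl, contDiff_infty_iff_deriv]
    constructor
    · exact fun z => (hasDerivAt_f0 z).differentiableAt
    · have : deriv f0 = fun z => (pd 0).eval z * gg z := by
        funext z; exact (hasDerivAt_f0 z).deriv
      rw [this]
      exact (contDiff_polyEval _).mul contDiff_gg
  | succ k => exact (contDiff_polyEval _).mul contDiff_gg

lemma iter_polyGauss (Q : ℝ[X]) (l : ℕ) :
    iteratedDeriv l (fun z => Q.eval z * gg z) = fun z => (Dp^[l] Q).eval z * gg z := by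
  induction l generalizing Q with
  | zero => simp
  | succ l ih =>
    rw [iteratedDeriv_succ']
    have hd : deriv (fun z => Q.eval z * gg z) = fun z => (Dp Q).eval z * gg z := by
      funext z; exact (hasDerivAt_polyGauss Q z).deriv
    rw [hd, ih, Function.iterate_succ_apply]

noncomputable def polyKL : ℕ → ℕ → ℝ[X]
  | 0, 0 => 0
  | 0, (l+1) => Dp^[l] (pd 0)
  | (k+1), l => Dp^[l] (vP (k+1))

lemma iteratedDeriv_phi (k l : ℕ) (h : k + l ≠ 0) :
    iteratedDeriv l (phi k) = fun z => (polyKL k l).eval z * gg z := by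
  match k, l with
  | 0, 0 => simp at h
  | 0, (l+1) =>
    rw [iteratedDeriv_succ']
    have hd : deriv (phi 0) = fun z => (pd 0).eval z * gg z := by
      funext z; exact (hasDerivAt_phi 0 z).deriv
    rw [hd, iter_polyGauss]
    rfl
  | (k+1), l =>
    rw [show phi (k+1) = fun z => (vP (k+1)).eval z * gg z from rfl, iter_polyGauss]
    rfl
lemma tendsto_polyExp (P : ℝ[X]) (c : ℝ) (hc : 0 < c) :
    Tendsto (fun z => P.eval z * Real.exp (-(c*z^2))) atTop (𝓝 0) := by
  have heq : (fun z => P.eval z * Real.exp (-(c*z^2)))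
      = fun z => (P.eval z / Real.exp z) * Real.exp (z - c*z^2) := by
    funext z
    rw [Real.exp_sub]
    field_simp
    rw [mul_assoc, ← Real.exp_add]
    simp
  rw [heq]
  have h2 : Tendsto (fun z : ℝ => z - c*z^2) atTop atBot := by
    have : (fun z : ℝ => z - c*z^2) = fun z : ℝ => z * (1 - c*z) := by funext z; ring
    rw [this]
    exact tendsto_id.atTop_mul_atBot₀
      (tendsto_atBot_add_const_left _ 1 (tendsto_neg_atTop_atBot.comp (tendsto_id.const_mul_atTop hc)))
  have h3 : Tendsto (fun z : ℝ => Real.exp (z - c*z^2)) atTop (𝓝 0) :=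
    Real.tendsto_exp_atBot.comp h2
  simpa using (P.tendsto_div_exp_atTop).mul h3

lemma exists_bound_of_tendsto (h : ℝ → ℝ) (hc : Continuous h)
    (ht : Tendsto h atTop (𝓝 0)) (hb : Tendsto h atBot (𝓝 0)) :
    ∃ M > 0, ∀ z, |h z| ≤ M := by
  have h1 : ∀ᶠ z in atTop, |h z| < 1 := by
    have := ht (Metric.ball_mem_nhds (0:ℝ) one_pos)
    simpa [Metric.mem_ball, Real.dist_eq] using this
  have h2 : ∀ᶠ z in atBot, |h z| < 1 := by
    have := hb (Metric.ball_mem_nhds (0:ℝ) one_pos)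
    simpa [Metric.mem_ball, Real.dist_eq] using this
  obtain ⟨A, hA⟩ := eventually_atTop.mp h1
  obtain ⟨B, hB⟩ := eventually_atBot.mp h2
  obtain ⟨C, hC⟩ := (isCompact_Icc (a := B) (b := A)).exists_bound_of_continuousOn
    hc.continuousOn
  refine ⟨max C 1, lt_of_lt_of_le one_pos (le_max_right _ _), fun z => ?_⟩
  rcases lt_or_ge z B with hz | hz
  · exact le_trans (hB z hz.le).le (le_max_right _ _)
  rcases le_or_gt z A with hz' | hz'
  · exact le_trans (by simpa [Real.norm_eq_abs] using hC z ⟨hz, hz'⟩) (le_max_left _ _)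
  · exact le_trans (hA z hz'.le).le (le_max_right _ _)

lemma poly_exp_bound (P : ℝ[X]) (c : ℝ) (hc : 0 < c) :
    ∃ M > 0, ∀ z, |P.eval z| * Real.exp (-(c*z^2)) ≤ M := by
  set h : ℝ → ℝ := fun z => P.eval z * Real.exp (-(c*z^2)) with hh
  have hcont : Continuous h := by
    apply Continuous.mul
    · exact P.continuous_aeval
    · exact Real.continuous_exp.comp ((continuous_const.mul (continuous_pow 2)).neg)
  have ht : Tendsto h atTop (𝓝 0) := tendsto_polyExp P c hc
  have hb : Tendsto h atBot (𝓝 0) := by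
    have h1 := (tendsto_polyExp (P.comp (-Polynomial.X)) c hc).comp tendsto_neg_atBot_atTop
    have : ((fun z => (P.comp (-Polynomial.X)).eval z * Real.exp (-(c*z^2)))
        ∘ fun z : ℝ => -z) = h := by
      funext z
      simp [Function.comp, Polynomial.eval_comp, hh]
    rwa [this] at h1
  obtain ⟨M, hM, hMb⟩ := exists_bound_of_tendsto h hcont ht hb
  refine ⟨M, hM, fun z => ?_⟩
  have := hMb z
  rwa [hh, abs_mul, abs_of_pos (Real.exp_pos _)] at this

lemma exp_split (a b z : ℝ) (h : a = b + z) : Real.exp (-a) = Real.exp (-b) * Real.exp (-z) := by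
  rw [← Real.exp_add]; congr 1; rw [h]; ring

lemma polyGauss_decay (P : ℝ[X]) :
    ∃ M > 0, ∀ z, |P.eval z * gg z| ≤ M * Real.exp (-(z^2/16)) := by
  obtain ⟨M, hM, hMb⟩ := poly_exp_bound P (3/16) (by norm_num)
  refine ⟨M, hM, fun z => ?_⟩
  have : gg z = Real.exp (-((3/16)*z^2)) * Real.exp (-(z^2/16)) := by
    rw [gg, neg_div, exp_split (z^2/4) ((3/16)*z^2) (z^2/16) (by ring)]
  rw [this, ← mul_assoc, abs_mul, abs_mul, abs_of_pos (Real.exp_pos (-(3/16*z^2))),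
    abs_of_pos (Real.exp_pos _)]
  exact mul_le_mul_of_nonneg_right (hMb z) (Real.exp_pos _).le

lemma integrable_gg : Integrable gg := by
  have h := integrable_exp_neg_mul_sq (show (0:ℝ) < 4⁻¹ by norm_num)
  have : gg = fun t : ℝ => Real.exp (-4⁻¹ * t^2) := by
    funext t; rw [gg, show -t^2/4 = -4⁻¹*t^2 by ring]
  rw [this]; exact h

lemma integral_gg_Ioi : ∫ t in Set.Ioi (0:ℝ), gg t = Real.sqrt π := by
  have h : ∫ t in Set.Ioi (0:ℝ), Real.exp (-4⁻¹ * t^2) = Real.sqrt (π/4⁻¹) / 2 :=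
    integral_gaussian_Ioi 4⁻¹
  have heq : ∫ t in Set.Ioi (0:ℝ), gg t = ∫ t in Set.Ioi (0:ℝ), Real.exp (-4⁻¹ * t^2) := by
    apply setIntegral_congr_fun measurableSet_Ioi
    intro t _; rw [gg, show -t^2/4 = -4⁻¹*t^2 by ring]
  rw [heq, h, show π/4⁻¹ = (2:ℝ)^2*π by ring, Real.sqrt_mul (by positivity),
    Real.sqrt_sq (by norm_num)]
  ring

lemma f0_eq (z : ℝ) (hz : 0 ≤ z) :
    f0 z = -((Real.sqrt π)⁻¹ * ∫ t in Set.Ioi z, gg t) := by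
  have hsplit : (∫ t in Set.Ioc 0 z, gg t) + (∫ t in Set.Ioi z, gg t)
      = ∫ t in Set.Ioi (0:ℝ), gg t := by
    rw [← setIntegral_union (Set.Ioc_disjoint_Ioi le_rfl) measurableSet_Ioi
      integrable_gg.integrableOn integrable_gg.integrableOn,
      Set.Ioc_union_Ioi_eq_Ioi hz]
  have hiv : ∫ t in (0:ℝ)..z, gg t = ∫ t in Set.Ioc 0 z, gg t :=
    intervalIntegral.integral_of_le hz
  have hπ : Real.sqrt π ≠ 0 := by positivity
  rw [f0, hiv, show (∫ t in Set.Ioc 0 z, gg t)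
      = Real.sqrt π - ∫ t in Set.Ioi z, gg t by rw [← integral_gg_Ioi, ← hsplit]; ring]
  field_simp
  ring

lemma f0_decay : ∃ M > 0, ∀ z, 0 ≤ z → |f0 z| ≤ M * Real.exp (-(z^2/8)) := by
  set c8 : ℝ := ∫ t in Set.Ioi (0:ℝ), Real.exp (-8⁻¹ * t^2) with hc8
  have hc8v : c8 = Real.sqrt (π/8⁻¹) / 2 := integral_gaussian_Ioi 8⁻¹
  have hc8pos : 0 < c8 := by rw [hc8v]; positivity
  refine ⟨(Real.sqrt π)⁻¹ * c8, by positivity, fun z hz => ?_⟩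
  have hint8 : Integrable (fun t : ℝ => Real.exp (-8⁻¹ * t^2)) :=
    integrable_exp_neg_mul_sq (by norm_num)
  have hstep1 : (∫ t in Set.Ioi z, gg t)
      ≤ ∫ t in Set.Ioi z, Real.exp (-(z^2/8)) * Real.exp (-8⁻¹ * t^2) := by
    apply setIntegral_mono_on integrable_gg.integrableOn
      ((hint8.const_mul _).integrableOn) measurableSet_Ioi
    intro t ht
    rw [gg, ← Real.exp_add]
    apply Real.exp_le_exp.mpr
    have h2 : z^2 ≤ t^2 := by
      apply sq_le_sq'
      · linarith [Set.mem_Ioi.mp ht]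
      · exact (Set.mem_Ioi.mp ht).le
    nlinarith
  have hstep2 : (∫ t in Set.Ioi z, Real.exp (-8⁻¹ * t^2))
      ≤ ∫ t in Set.Ioi (0:ℝ), Real.exp (-8⁻¹ * t^2) := by
    apply setIntegral_mono_set hint8.integrableOn
      (Filter.Eventually.of_forall fun t => (Real.exp_pos _).le)
    exact (Set.Ioi_subset_Ioi hz).eventuallyLE
  have hnn : 0 ≤ ∫ t in Set.Ioi z, gg t :=
    setIntegral_nonneg measurableSet_Ioi fun t _ => (Real.exp_pos _).le
  rw [f0_eq z hz, abs_neg, abs_of_nonneg (by positivity)]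
  rw [integral_const_mul] at hstep1
  calc (Real.sqrt π)⁻¹ * ∫ t in Set.Ioi z, gg t
      ≤ (Real.sqrt π)⁻¹ * (Real.exp (-(z^2/8)) * c8) := by
        apply mul_le_mul_of_nonneg_left _ (by positivity)
        exact hstep1.trans (mul_le_mul_of_nonneg_left hstep2 (Real.exp_pos _).le)
    _ = (Real.sqrt π)⁻¹ * c8 * Real.exp (-(z^2/8)) := by ring

lemma main_pointwise (m l k : ℕ) :
    ∃ M > 0, ∀ z : ℝ, 0 ≤ z →
      |z^m * iteratedDeriv l (phi k) z| ≤ M * Real.exp (-(z^2/16)) := by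
  by_cases h : k + l = 0
  · obtain ⟨hk, hl⟩ := Nat.add_eq_zero.mp h
    subst hk; subst hl
    obtain ⟨Mf, hMf, hMfb⟩ := f0_decay
    obtain ⟨Mp, hMp, hMpb⟩ := poly_exp_bound (Polynomial.X ^ m) 16⁻¹ (by norm_num)
    refine ⟨Mf * Mp, by positivity, fun z hz => ?_⟩
    rw [iteratedDeriv_zero]
    have h1 : |z^m * phi 0 z| = |z^m| * |f0 z| := abs_mul _ _
    rw [h1]
    calc |z^m| * |f0 z| ≤ |z^m| * (Mf * Real.exp (-(z^2/8))) :=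
          mul_le_mul_of_nonneg_left (hMfb z hz) (abs_nonneg _)
      _ = Mf * (|z^m| * Real.exp (-(16⁻¹*z^2))) * Real.exp (-(z^2/16)) := by
          rw [exp_split (z^2/8) (16⁻¹*z^2) (z^2/16) (by ring)]; ring
      _ ≤ Mf * Mp * Real.exp (-(z^2/16)) := by
          apply mul_le_mul_of_nonneg_right _ (Real.exp_pos _).le
          apply mul_le_mul_of_nonneg_left _ hMf.le
          simpa using hMpb z
  · obtain ⟨M, hM, hMb⟩ := polyGauss_decay (Polynomial.X ^ m * polyKL k l)
    refine ⟨M, hM, fun z hz => ?_⟩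
    rw [iteratedDeriv_phi k l h]
    have : z^m * ((polyKL k l).eval z * gg z)
        = (Polynomial.X ^ m * polyKL k l).eval z * gg z := by
      simp [Polynomial.eval_mul]; ring
    rw [this]
    exact hMb z

lemma eDelta_sub (δ w : ℝ) : eDelta δ w - δ = δ * f0 w := by
  rw [eDelta, f0]
  have : (∫ t in (0:ℝ)..w, Real.exp (-t^2/4)) = ∫ t in (0:ℝ)..w, gg t := rfl
  rw [this, div_eq_mul_inv]
  ring

lemma iter_x (δ η : ℝ) (k : ℕ) : ∀ x : ℝ, 0 < x →
    iteratedDeriv k (fun x' => eDelta δ (η / Real.sqrt x') - δ) x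
      = δ * (x ^ (-(k:ℤ)) * phi k (η / Real.sqrt x)) := by
  induction k with
  | zero => intro x hx; simp [eDelta_sub, phi]
  | succ k ih =>
    intro x hx
    rw [iteratedDeriv_succ]
    have hev : (iteratedDeriv k (fun x' => eDelta δ (η / Real.sqrt x') - δ))
        =ᶠ[𝓝 x] fun x' => δ * (x' ^ (-(k:ℤ)) * phi k (η / Real.sqrt x')) :=
      Filter.eventually_of_mem (Ioi_mem_nhds hx) fun x' hx' => ih x' hx'
    rw [hev.deriv_eq]
    set s := Real.sqrt x with hs
    have hspos : 0 < s := Real.sqrt_pos.mpr hx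
    have hsne : s ≠ 0 := hspos.ne'
    have hsq : s^2 = x := Real.sq_sqrt hx.le
    set z := η / s with hz
    have hsd : HasDerivAt Real.sqrt (1/(2*s)) x := Real.hasDerivAt_sqrt hx.ne'
    have hinv : HasDerivAt (fun x' => (Real.sqrt x')⁻¹) (-(1/(2*s)) / s^2) x :=
      hsd.inv hsne
    have hzd : HasDerivAt (fun x' => η / Real.sqrt x') (η * (-(1/(2*s)) / s^2)) x := by
      simpa [div_eq_mul_inv] using hinv.const_mul η
    have hphi : HasDerivAt (fun x' => phi k (η / Real.sqrt x'))
        ((pd k).eval z * gg z * (η * (-(1/(2*s)) / s^2))) x :=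
      (hasDerivAt_phi k z).comp x hzd
    have hzpow : HasDerivAt (fun x' : ℝ => x' ^ (-(k:ℤ))) ((-(k:ℤ)) * x ^ (-(k:ℤ)-1)) x := by
      exact_mod_cast hasDerivAt_zpow (-(k:ℤ)) x (Or.inl hx.ne')
    have htot : HasDerivAt (fun x' => δ * (x' ^ (-(k:ℤ)) * phi k (η / Real.sqrt x')))
        (δ * ((-(k:ℤ)) * x ^ (-(k:ℤ)-1) * phi k z
          + x ^ (-(k:ℤ)) * ((pd k).eval z * gg z * (η * (-(1/(2*s)) / s^2))))) x :=
      (hzpow.mul hphi).const_mul δ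
    rw [htot.deriv]
    have hz1 : x ^ (-(k:ℤ)-1) = x ^ (-(k:ℤ)) * x⁻¹ := by
      rw [show (-(k:ℤ)-1) = -(k:ℤ) + (-1) by ring, zpow_add₀ hx.ne', zpow_neg_one]
    have hz2 : x ^ (-((k:ℕ)+1:ℕ):ℤ) = x ^ (-(k:ℤ)) * x⁻¹ := by
      rw [show (-((k:ℕ)+1:ℕ):ℤ) = -(k:ℤ) + (-1) by push_cast; ring, zpow_add₀ hx.ne',
        zpow_neg_one]
    rw [hz1, hz2, phi_succ, show η = z * s by rw [hz]; field_simp, hsq]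
    have hxne : x ≠ 0 := hx.ne'
    field_simp
    push_cast
    ring

lemma inner_formula (δ : ℝ) (k l : ℕ) (x : ℝ) (hx : 0 < x) (η : ℝ) :
    iteratedDeriv l (fun η' => iteratedDeriv k (fun x' => eDelta δ (η' / Real.sqrt x') - δ) x) η
      = δ * (x ^ (-(k:ℤ)) *
          (((Real.sqrt x)⁻¹) ^ l * iteratedDeriv l (phi k) ((Real.sqrt x)⁻¹ * η))) := by
  have hfun : (fun η' => iteratedDeriv k (fun x' => eDelta δ (η' / Real.sqrt x') - δ) x)
      = fun η' => (δ * x ^ (-(k:ℤ))) * phi k ((Real.sqrt x)⁻¹ * η') := by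
    funext η'
    rw [iter_x δ η' k x hx, div_eq_inv_mul]
    ring
  rw [hfun]
  have hcd : ContDiffOn ℝ (l:ℕ∞) (fun η' : ℝ => phi k ((Real.sqrt x)⁻¹ * η')) Set.univ :=
    (((contDiff_phi k).of_le (mod_cast le_top)).comp
      (contDiff_const.mul contDiff_id)).contDiffOn
  rw [← iteratedDerivWithin_univ,
    iteratedDerivWithin_const_mul (Set.mem_univ η) uniqueDiffOn_univ (δ * x ^ (-(k:ℤ))) (hcd η (Set.mem_univ η)),
    iteratedDerivWithin_univ,
    iteratedDeriv_comp_const_mul ((contDiff_phi k).of_le (mod_cast le_top)) ((Real.sqrt x)⁻¹)]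
  ring

lemma gaussian_eLpNorm (p : ℝ≥0∞) (hp : 2 ≤ p) (x : ℝ) (hx : 1 ≤ x) :
    eLpNorm (fun η : ℝ => Real.exp (-(η^2/(16*x)))) p (volume.restrict (Set.Ioi 0))
      ≤ ENNReal.ofReal (3 * x ^ (1/(2*p.toReal))) := by
  have hxpos : (0:ℝ) < x := lt_of_lt_of_le one_pos hx
  by_cases hptop : p = ∞
  · subst hptop
    rw [eLpNorm_exponent_top]
    refine le_trans (eLpNormEssSup_le_of_ae_bound (C := 1) (ae_of_all _ fun η => ?_)) ?_
    · rw [Real.norm_eq_abs, abs_of_pos (Real.exp_pos _)]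
      exact Real.exp_le_one_iff.mpr (neg_nonpos.mpr (by positivity))
    · apply ENNReal.ofReal_le_ofReal
      simp [Real.rpow_zero]
  · have hp0 : p ≠ 0 := by
      intro h; rw [h] at hp; exact absurd hp (by simp)
    set r := p.toReal with hrdef
    have hr2 : (2:ℝ) ≤ r := by
      have h := ENNReal.toReal_mono hptop hp
      simpa using h
    have hr0 : (0:ℝ) < r := lt_of_lt_of_le two_pos hr2
    set b : ℝ := r / (16*x) with hb
    have hbpos : 0 < b := by positivity
    rw [eLpNorm_eq_lintegral_rpow_enorm_toReal hp0 hptop, ← hrdef]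
    have hpt : ∀ η : ℝ, ‖Real.exp (-(η^2/(16*x)))‖ₑ ^ r
        = ENNReal.ofReal (Real.exp (-b * η^2)) := by
      intro η
      rw [Real.enorm_eq_ofReal (Real.exp_pos _).le,
        ENNReal.ofReal_rpow_of_pos (Real.exp_pos _), ← Real.exp_mul]
      congr 1
      rw [hb]
      field_simp
    simp_rw [hpt]
    have hint : IntegrableOn (fun η : ℝ => Real.exp (-b * η^2)) (Set.Ioi 0) :=
      (integrable_exp_neg_mul_sq hbpos).integrableOn
    rw [← ofReal_integral_eq_lintegral_ofReal hint
      (ae_of_all _ fun η => (Real.exp_pos _).le), integral_gaussian_Ioi b,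
      ENNReal.ofReal_rpow_of_pos (by positivity)]
    apply ENNReal.ofReal_le_ofReal
    have h0 : (0:ℝ) ≤ Real.sqrt (π/b) / 2 := by positivity
    have h1 : Real.sqrt (π/b) / 2 ≤ 3 * Real.sqrt x := by
      have hπb : π / b ≤ 36 * x := by
        rw [hb, div_div_eq_mul_div, div_le_iff₀ hr0]
        nlinarith [Real.pi_le_four, Real.pi_pos]
      calc Real.sqrt (π/b) / 2 ≤ Real.sqrt (36*x) / 2 := by gcongr
        _ = 3 * Real.sqrt x := by
            rw [show (36:ℝ)*x = 6^2*x by norm_num, Real.sqrt_mul (by positivity),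
              Real.sqrt_sq (by norm_num)]
            ring
    have h2 : (Real.sqrt (π/b) / 2) ^ (1/r) ≤ (3 * Real.sqrt x) ^ (1/r) :=
      Real.rpow_le_rpow h0 h1 (by positivity)
    refine h2.trans ?_
    rw [Real.mul_rpow (by norm_num) (Real.sqrt_nonneg x), Real.sqrt_eq_rpow,
      ← Real.rpow_mul hxpos.le, show (1:ℝ)/2 * (1/r) = 1/(2*r) by ring]
    apply mul_le_mul_of_nonneg_right _ (Real.rpow_nonneg hxpos.le _)
    calc (3:ℝ) ^ (1/r) ≤ 3 ^ (1:ℝ) :=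
          Real.rpow_le_rpow_of_exponent_le (by norm_num)
            (by rw [div_le_one hr0]; linarith)
      _ = 3 := Real.rpow_one 3

theorem stmt3 (m l k : ℕ) :
    ∃ C > (0:ℝ), ∀ δ : ℝ, 0 < δ → ∀ p : ℝ≥0∞, 2 ≤ p → ∀ x : ℝ, 1 ≤ x →
      eLpNorm
        (fun η : ℝ => (η / Real.sqrt x)^m *
          iteratedDeriv l
            (fun η' => iteratedDeriv k (fun x' => eDelta δ (η' / Real.sqrt x') - δ) x) η)
        p (volume.restrict (Set.Ioi 0))
      ≤ ENNReal.ofReal (C * δ * x ^ (-(k:ℝ) - (l:ℝ)/2 + 1/(2 * p.toReal))) := by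
  obtain ⟨M, hM, hMb⟩ := main_pointwise m l k
  refine ⟨3*M, by positivity, fun δ hδ p hp x hx => ?_⟩
  have hxpos : (0:ℝ) < x := lt_of_lt_of_le one_pos hx
  have hspos : (0:ℝ) < Real.sqrt x := Real.sqrt_pos.mpr hxpos
  set c : ℝ := (Real.sqrt x)⁻¹ with hc
  have hcpos : 0 < c := by positivity
  set Φ : ℝ → ℝ := iteratedDeriv l (phi k) with hΦ
  set A : ℝ := δ * (x ^ (-(k:ℤ)) * c^l) with hA
  have hApos : 0 < A := by
    rw [hA]
    have : (0:ℝ) < x ^ (-(k:ℤ)) := zpow_pos hxpos _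
    positivity
  have hsq : ∀ η : ℝ, (c*η)^2/16 = η^2/(16*x) := by
    intro η
    rw [mul_pow, hc, inv_pow, Real.sq_sqrt hxpos.le]
    field_simp
  refine (eLpNorm_mono_ae (g := fun η => (A*M) * Real.exp (-(η^2/(16*x)))) ?_).trans ?_
  · apply ae_restrict_of_forall_mem measurableSet_Ioi
    intro η hη
    rw [inner_formula δ k l x hxpos η, Real.norm_eq_abs, Real.norm_eq_abs,
      abs_of_pos (mul_pos (mul_pos hApos hM) (Real.exp_pos _))]
    have hrw : (η / Real.sqrt x)^m * (δ * (x ^ (-(k:ℤ)) * (c^l * Φ (c*η))))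
        = A * ((c*η)^m * Φ (c*η)) := by
      rw [div_eq_inv_mul, hA]
      ring
    rw [hrw, abs_mul, abs_of_pos hApos]
    calc A * |(c*η)^m * Φ (c*η)| ≤ A * (M * Real.exp (-((c*η)^2/16))) := by
          apply mul_le_mul_of_nonneg_left _ hApos.le
          exact hMb (c*η) (mul_nonneg hcpos.le (Set.mem_Ioi.mp hη).le)
      _ = A * M * Real.exp (-(η^2/(16*x))) := by rw [hsq η]; ring
  · have hfe : (fun η : ℝ => (A*M) * Real.exp (-(η^2/(16*x))))
        = (A*M) • (fun η : ℝ => Real.exp (-(η^2/(16*x)))) := rfl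
    rw [hfe, eLpNorm_const_smul,
      Real.enorm_eq_ofReal (mul_pos hApos hM).le]
    refine le_trans (mul_le_mul_right (gaussian_eLpNorm p hp x hx) _) ?_
    rw [← ENNReal.ofReal_mul (mul_pos hApos hM).le]
    apply ENNReal.ofReal_le_ofReal
    apply le_of_eq
    have h1 : x ^ (-(k:ℤ)) = x ^ ((-(k:ℕ) : ℝ)) := by
      rw [← Real.rpow_intCast x (-(k:ℤ))]
      norm_num
    have h2 : c ^ l = x ^ ((-(1/2) : ℝ) * l) := by
      rw [hc, Real.sqrt_eq_rpow, ← Real.rpow_neg hxpos.le,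
        ← Real.rpow_natCast (x ^ (-(1/2):ℝ)) l, ← Real.rpow_mul hxpos.le]
    rw [hA, h1, h2]
    have hcomb : x ^ ((-(k:ℕ) : ℝ)) * x ^ ((-(1/2):ℝ)*l) * x ^ (1/(2*p.toReal))
        = x ^ (-(k:ℝ) - (l:ℝ)/2 + 1/(2*p.toReal)) := by
      rw [← Real.rpow_add hxpos, ← Real.rpow_add hxpos]
      congr 1
      push_cast
      ring
    linear_combination (3*M*δ) * hcomb
end

section
/- Let v be a harmonic function on the open upper half-plane {(x,Y) : Y > 0}, smooth up to the boundary {Y = 0}, and suppose that for every integer k ≥ 0 there is a constant A_k such that sup_{Y ≥ 0} |∂_x^k v(x,Y)| ≤ A_k x^{−k−1/2} for all x ≥ 1. Then: (i) for every integer k ≥ 1 there is a constant C depending only on k and on A₀,…,A_{2k} such that sup_{Y ≥ 0} |∂_Y^k v(x,Y)| ≤ C x^{−k−1/2} for all x ≥ 1; (ii) there is a universal constant C such that sup_{Y ≥ 0} |∂_Y v(x,Y)| ≤ C (A₀ A₂)^{1/2} x^{−3/2} for all x ≥ 1. -/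
open Set Filter

noncomputable section


lemma stmt8_taylor2 {F F' F'' : ℝ → ℝ} {M2 : ℝ}
    (hd1 : ∀ y : ℝ, 0 < y → HasDerivAt F (F' y) y)
    (hd2 : ∀ y : ℝ, 0 < y → HasDerivAt F' (F'' y) y)
    (hb2 : ∀ y : ℝ, 0 < y → |F'' y| ≤ M2)
    {y h : ℝ} (hy : 0 < y) (hh : 0 < h) :
    |F (y+h) - F y - h * F' y| ≤ M2 * h^2 / 2 := by
  have hpos : ∀ t ∈ Icc y (y+h), 0 < t := fun t ht => lt_of_lt_of_le hy ht.1
  -- MVT bound on F'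
  have key : ∀ t ∈ Icc y (y+h), |F' t - F' y| ≤ M2 * (t - y) := by
    intro t ht
    have := norm_image_sub_le_of_norm_deriv_le_segment'
      (f := F') (f' := F'') (a := y) (b := y + h) (C := M2)
      (fun s hs => (hd2 s (hpos s hs)).hasDerivWithinAt)
      (fun s hs => hb2 s (hpos s ⟨hs.1, le_of_lt hs.2⟩)) t ht
    simpa [Real.norm_eq_abs] using this
  -- monotone trick
  have mono : ∀ (σ : ℝ), σ = 1 ∨ σ = -1 →
      σ * (F (y+h) - F y - h * F' y) ≤ M2 * h^2 / 2 := by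
    intro σ hσ
    set φ : ℝ → ℝ := fun t => M2 * (t-y)^2/2 - σ * (F t - F y - (t-y) * F' y) with hφ
    have hder : ∀ t ∈ Icc y (y+h), HasDerivAt φ (M2 * (t-y) - σ * (F' t - F' y)) t := by
      intro t ht
      have h1 : HasDerivAt (fun t => M2 * (t-y)^2/2) (M2 * (t-y)) t := by
        have : HasDerivAt (fun t : ℝ => (t-y)^2) (2*(t-y)) t := by
          simpa using ((hasDerivAt_id t).sub_const y).fun_pow 2
        have := (this.const_mul M2).div_const 2
        exact this.congr_deriv (by ring)
      have h2 : HasDerivAt (fun t => σ * (F t - F y - (t-y) * F' y))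
          (σ * (F' t - F' y)) t := by
        have hF := hd1 t (hpos t ht)
        have : HasDerivAt (fun t => F t - F y - (t-y) * F' y) (F' t - F' y) t := by
          have := (hF.sub_const (F y)).sub
            (((hasDerivAt_id t).sub_const y).mul_const (F' y))
          simpa [Pi.sub_def] using this
        exact this.const_mul σ
      exact h1.sub h2
    have hmono : MonotoneOn φ (Icc y (y+h)) := by
      apply monotoneOn_of_deriv_nonneg (convex_Icc _ _)
      · exact fun t ht => ((hder t ht).continuousAt).continuousWithinAt
      · intro t ht
        rw [interior_Icc] at ht
        exact ((hder t (Ioo_subset_Icc_self ht)).differentiableAt).differentiableWithinAt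
      · intro t ht
        rw [interior_Icc] at ht
        have ht' : t ∈ Icc y (y+h) := Ioo_subset_Icc_self ht
        rw [(hder t ht').deriv]
        have hk := key t ht'
        have hσ1 : |σ| = 1 := by rcases hσ with h|h <;> simp [h]
        have : σ * (F' t - F' y) ≤ M2 * (t - y) := by
          calc σ * (F' t - F' y) ≤ |σ * (F' t - F' y)| := le_abs_self _
          _ = |F' t - F' y| := by rw [abs_mul, hσ1, one_mul]
          _ ≤ M2 * (t - y) := hk
        linarith
    have h0 : φ y ≤ φ (y+h) :=
      hmono (left_mem_Icc.2 (by linarith)) (right_mem_Icc.2 (by linarith)) (by linarith)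
    have hφy : φ y = 0 := by simp [hφ]
    rw [hφy] at h0
    simp only [hφ] at h0
    have : (y + h - y) = h := by ring
    rw [this] at h0
    linarith
  have h1 := mono 1 (Or.inl rfl)
  have h2 := mono (-1) (Or.inr rfl)
  rw [abs_le]; constructor <;> linarith

lemma stmt8_landau {F F' F'' : ℝ → ℝ} {M0 M2 : ℝ} (hM0 : 0 ≤ M0) (hM2 : 0 ≤ M2)
    (hb0 : ∀ y : ℝ, 0 < y → |F y| ≤ M0)
    (hd1 : ∀ y : ℝ, 0 < y → HasDerivAt F (F' y) y)
    (hd2 : ∀ y : ℝ, 0 < y → HasDerivAt F' (F'' y) y)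
    (hb2 : ∀ y : ℝ, 0 < y → |F'' y| ≤ M2) :
    ∀ y : ℝ, 0 < y → |F' y| ≤ 2 * Real.sqrt (M0 * M2) := by
  intro y hy
  have key : ∀ h : ℝ, 0 < h → |F' y| ≤ 2*M0/h + M2*h/2 := by
    intro h hh
    have ht := stmt8_taylor2 hd1 hd2 hb2 hy hh
    have h1 := hb0 (y+h) (by linarith)
    have h2 := hb0 y hy
    obtain ⟨ht1, ht2⟩ := abs_le.1 ht
    obtain ⟨h11, h12⟩ := abs_le.1 h1
    obtain ⟨h21, h22⟩ := abs_le.1 h2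
    have hub : h * F' y ≤ 2*M0 + M2*h^2/2 := by linarith
    have hlb : -(2*M0 + M2*h^2/2) ≤ h * F' y := by linarith
    have e1 : 2*M0/h + M2*h/2 = (2*M0 + M2*h^2/2)/h := by field_simp
    rw [e1, abs_le]
    constructor
    · rw [← neg_div, div_le_iff₀ hh]
      linarith [hlb, mul_comm h (F' y)]
    · rw [le_div_iff₀ hh]
      linarith [hub, mul_comm h (F' y)]
  rcases eq_or_lt_of_le hM0 with hM0' | hM0'
  · -- M0 = 0
    have : ∀ ε : ℝ, 0 < ε → |F' y| ≤ ε := by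
      intro ε hε
      have hh : 0 < 2*ε/(M2+1) := by positivity
      have := key _ hh
      rw [← hM0'] at this
      have hM2' : M2/(M2+1) ≤ 1 := by
        rw [div_le_one (by linarith)]; linarith
      calc |F' y| ≤ 2*0/(2*ε/(M2+1)) + M2*(2*ε/(M2+1))/2 := this
        _ = (M2/(M2+1)) * ε := by field_simp; ring
        _ ≤ 1 * ε := by nlinarith
        _ = ε := one_mul ε
    have h0 : |F' y| ≤ 0 := by
      by_contra hcon
      push_neg at hcon
      have := this (|F' y|/2) (by linarith)
      linarith
    calc |F' y| ≤ 0 := h0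
      _ ≤ 2 * Real.sqrt (M0 * M2) := by positivity
  · rcases eq_or_lt_of_le hM2 with hM2' | hM2'
    · -- M2 = 0
      have : ∀ ε : ℝ, 0 < ε → |F' y| ≤ ε := by
        intro ε hε
        have hh : 0 < (2*M0+1)/ε := by positivity
        have := key _ hh
        rw [← hM2'] at this
        have : |F' y| ≤ 2*M0/((2*M0+1)/ε) := by linarith [this]
        have heq : 2*M0/((2*M0+1)/ε) = (2*M0/(2*M0+1)) * ε := by
          field_simp
        rw [heq] at this
        have : (2*M0/(2*M0+1)) * ε ≤ 1 * ε := by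
          have : 2*M0/(2*M0+1) ≤ 1 := by rw [div_le_one (by linarith)]; linarith
          nlinarith
        linarith
      have h0 : |F' y| ≤ 0 := by
        by_contra hcon
        push_neg at hcon
        have := this (|F' y|/2) (by linarith)
        linarith
      calc |F' y| ≤ 0 := h0
        _ ≤ 2 * Real.sqrt (M0 * M2) := by positivity
    · -- both positive
      set s0 := Real.sqrt M0 with hs0
      set s2 := Real.sqrt M2 with hs2
      have hs0p : 0 < s0 := Real.sqrt_pos.2 hM0'
      have hs2p : 0 < s2 := Real.sqrt_pos.2 hM2'
      have hq0 : s0^2 = M0 := Real.sq_sqrt hM0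
      have hq2 : s2^2 = M2 := Real.sq_sqrt hM2
      have hh : 0 < 2*s0/s2 := by positivity
      have := key _ hh
      have heq : 2*M0/(2*s0/s2) + M2*(2*s0/s2)/2 = 2 * (s0 * s2) := by
        field_simp
        nlinarith [hq0, hq2]
      rw [heq] at this
      rwa [Real.sqrt_mul hM0, ← hs0, ← hs2]



def sU : Set (ℝ × ℝ) := {p | 0 < p.2}

lemma sU_open : IsOpen sU := isOpen_lt continuous_const continuous_snd

def pX (g : ℝ × ℝ → ℝ) : ℝ × ℝ → ℝ := fun p => deriv (fun t => g (t, p.2)) p.1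
def pY (g : ℝ × ℝ → ℝ) : ℝ × ℝ → ℝ := fun p => deriv (fun t => g (p.1, t)) p.2

def SmU (g : ℝ × ℝ → ℝ) : Prop := ContDiffOn ℝ (⊤ : ℕ∞) g sU

lemma smU_contDiffAt {g : ℝ × ℝ → ℝ} (hg : SmU g) {p : ℝ × ℝ} (hp : p ∈ sU) :
    ContDiffAt ℝ (⊤ : ℕ∞) g p := hg.contDiffAt (sU_open.mem_nhds hp)

lemma smU_diffAt {g : ℝ × ℝ → ℝ} (hg : SmU g) {p : ℝ × ℝ} (hp : p ∈ sU) :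
    DifferentiableAt ℝ g p := (smU_contDiffAt hg hp).differentiableAt (by simp)

lemma hasDerivAt_sliceX {g : ℝ × ℝ → ℝ} {p : ℝ × ℝ} (hg : DifferentiableAt ℝ g p) :
    HasDerivAt (fun t => g (t, p.2)) (fderiv ℝ g p (1, 0)) p.1 := by
  have h1 : HasDerivAt (fun t : ℝ => ((t, p.2) : ℝ × ℝ)) ((1 : ℝ), (0 : ℝ)) p.1 :=
    (hasDerivAt_id _).prodMk (hasDerivAt_const _ _)
  have h2 : HasFDerivAt g (fderiv ℝ g p) ((p.1, p.2) : ℝ × ℝ) := by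
    simpa using hg.hasFDerivAt
  simpa [Function.comp_def] using h2.comp_hasDerivAt p.1 h1

lemma hasDerivAt_sliceY {g : ℝ × ℝ → ℝ} {p : ℝ × ℝ} (hg : DifferentiableAt ℝ g p) :
    HasDerivAt (fun t => g (p.1, t)) (fderiv ℝ g p (0, 1)) p.2 := by
  have h1 : HasDerivAt (fun t : ℝ => ((p.1, t) : ℝ × ℝ)) ((0 : ℝ), (1 : ℝ)) p.2 :=
    (hasDerivAt_const _ _).prodMk (hasDerivAt_id _)
  have h2 : HasFDerivAt g (fderiv ℝ g p) ((p.1, p.2) : ℝ × ℝ) := by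
    simpa using hg.hasFDerivAt
  simpa [Function.comp_def] using h2.comp_hasDerivAt p.2 h1

lemma pX_eq {g : ℝ × ℝ → ℝ} {p : ℝ × ℝ} (hg : DifferentiableAt ℝ g p) :
    pX g p = fderiv ℝ g p (1, 0) := (hasDerivAt_sliceX hg).deriv

lemma pY_eq {g : ℝ × ℝ → ℝ} {p : ℝ × ℝ} (hg : DifferentiableAt ℝ g p) :
    pY g p = fderiv ℝ g p (0, 1) := (hasDerivAt_sliceY hg).deriv

lemma smU_fderiv {g : ℝ × ℝ → ℝ} (hg : SmU g) :
    ContDiffOn ℝ (⊤ : ℕ∞) (fderiv ℝ g) sU := by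
  have := (contDiffOn_infty_iff_fderiv_of_isOpen sU_open).1 hg
  exact this.2

lemma smU_pX {g : ℝ × ℝ → ℝ} (hg : SmU g) : SmU (pX g) := by
  apply ContDiffOn.congr (f := fun p => fderiv ℝ g p (1, 0))
  · exact (smU_fderiv hg).clm_apply contDiffOn_const
  · exact fun p hp => pX_eq (smU_diffAt hg hp)

lemma smU_pY {g : ℝ × ℝ → ℝ} (hg : SmU g) : SmU (pY g) := by
  apply ContDiffOn.congr (f := fun p => fderiv ℝ g p (0, 1))
  · exact (smU_fderiv hg).clm_apply contDiffOn_const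
  · exact fun p hp => pY_eq (smU_diffAt hg hp)

lemma smU_hasDerivAt_pY {g : ℝ × ℝ → ℝ} (hg : SmU g) {p : ℝ × ℝ} (hp : p ∈ sU) :
    HasDerivAt (fun t => g (p.1, t)) (pY g p) p.2 := by
  rw [pY_eq (smU_diffAt hg hp)]
  exact hasDerivAt_sliceY (smU_diffAt hg hp)

lemma fderiv_clm_apply_const {g : ℝ × ℝ → ℝ} {p : ℝ × ℝ}
    (hd : DifferentiableAt ℝ (fderiv ℝ g) p) (w u : ℝ × ℝ) :
    fderiv ℝ (fun q => fderiv ℝ g q w) p u = (fderiv ℝ (fderiv ℝ g) p u) w := by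
  rw [fderiv_clm_apply hd (differentiableAt_const w)]
  simp

lemma clairaut {g : ℝ × ℝ → ℝ} (hg : SmU g) {p : ℝ × ℝ} (hp : p ∈ sU) :
    pX (pY g) p = pY (pX g) p := by
  have hdf : DifferentiableAt ℝ (fderiv ℝ g) p :=
    ((smU_fderiv hg).contDiffAt (sU_open.mem_nhds hp)).differentiableAt (by simp)
  have hf2 := hdf.hasFDerivAt
  have hsymm : ∀ u w : ℝ × ℝ,
      fderiv ℝ (fderiv ℝ g) p u w = fderiv ℝ (fderiv ℝ g) p w u := by
    intro u w
    apply second_derivative_symmetric_of_eventually (f := g) (f' := fderiv ℝ g) (x := p)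
    · filter_upwards [sU_open.mem_nhds hp] with q hq
        using (smU_diffAt hg hq).hasFDerivAt
    · exact hf2
  have e1 : pX (pY g) p = fderiv ℝ (pY g) p (1, 0) := pX_eq (smU_diffAt (smU_pY hg) hp)
  have e2 : pY (pX g) p = fderiv ℝ (pX g) p (0, 1) := pY_eq (smU_diffAt (smU_pX hg) hp)
  have e3 : fderiv ℝ (pY g) p = fderiv ℝ (fun q => fderiv ℝ g q (0, 1)) p := by
    apply Filter.EventuallyEq.fderiv_eq
    filter_upwards [sU_open.mem_nhds hp] with q hq
      using pY_eq (smU_diffAt hg hq)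
  have e4 : fderiv ℝ (pX g) p = fderiv ℝ (fun q => fderiv ℝ g q (1, 0)) p := by
    apply Filter.EventuallyEq.fderiv_eq
    filter_upwards [sU_open.mem_nhds hp] with q hq
      using pX_eq (smU_diffAt hg hq)
  rw [e1, e3, fderiv_clm_apply_const hdf, e2, e4, fderiv_clm_apply_const hdf]
  exact hsymm _ _


lemma pX_congrU {g₁ g₂ : ℝ × ℝ → ℝ} (h : ∀ q ∈ sU, g₁ q = g₂ q) {p : ℝ × ℝ}
    (hp : p ∈ sU) : pX g₁ p = pX g₂ p := by
  apply Filter.EventuallyEq.deriv_eq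
  exact Filter.Eventually.of_forall fun t => h (t, p.2) hp

lemma pY_congrU {g₁ g₂ : ℝ × ℝ → ℝ} (h : ∀ q ∈ sU, g₁ q = g₂ q) {p : ℝ × ℝ}
    (hp : p ∈ sU) : pY g₁ p = pY g₂ p := by
  apply Filter.EventuallyEq.deriv_eq
  have hmem : Ioi (0:ℝ) ∈ nhds p.2 := Ioi_mem_nhds hp
  filter_upwards [hmem] with t ht
  exact h (p.1, t) ht

lemma pX_neg (g : ℝ × ℝ → ℝ) : pX (fun q => -(g q)) = fun p => -(pX g p) := by
  funext p; exact deriv.neg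

lemma pY_neg (g : ℝ × ℝ → ℝ) : pY (fun q => -(g q)) = fun p => -(pY g p) := by
  funext p; exact deriv.neg

lemma pX_const_mul (c : ℝ) (g : ℝ × ℝ → ℝ) :
    pX (fun q => c * g q) = fun p => c * pX g p := by
  funext p; exact deriv_const_mul_field c

lemma pY_const_mul (c : ℝ) (g : ℝ × ℝ → ℝ) :
    pY (fun q => c * g q) = fun p => c * pY g p := by
  funext p; exact deriv_const_mul_field c

lemma smU_pX_iter {g : ℝ × ℝ → ℝ} (hg : SmU g) (n : ℕ) : SmU (pX^[n] g) := by
  induction n with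
  | zero => exact hg
  | succ n ih => rw [Function.iterate_succ_apply']; exact smU_pX ih

lemma smU_pY_iter {g : ℝ × ℝ → ℝ} (hg : SmU g) (n : ℕ) : SmU (pY^[n] g) := by
  induction n with
  | zero => exact hg
  | succ n ih => rw [Function.iterate_succ_apply']; exact smU_pY ih

lemma pX_iter_congrU {g₁ g₂ : ℝ × ℝ → ℝ} (h : ∀ q ∈ sU, g₁ q = g₂ q) (n : ℕ) :
    ∀ p ∈ sU, pX^[n] g₁ p = pX^[n] g₂ p := by
  induction n with
  | zero => exact h
  | succ n ih =>
    intro p hp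
    rw [Function.iterate_succ_apply', Function.iterate_succ_apply']
    exact pX_congrU ih hp

lemma pY_iter_congrU {g₁ g₂ : ℝ × ℝ → ℝ} (h : ∀ q ∈ sU, g₁ q = g₂ q) (n : ℕ) :
    ∀ p ∈ sU, pY^[n] g₁ p = pY^[n] g₂ p := by
  induction n with
  | zero => exact h
  | succ n ih =>
    intro p hp
    rw [Function.iterate_succ_apply', Function.iterate_succ_apply']
    exact pY_congrU ih hp

lemma pX_iter_const_mul (c : ℝ) (g : ℝ × ℝ → ℝ) (n : ℕ) :
    pX^[n] (fun q => c * g q) = fun p => c * pX^[n] g p := by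
  induction n with
  | zero => rfl
  | succ n ih =>
    rw [Function.iterate_succ_apply', Function.iterate_succ_apply', ih, pX_const_mul]

lemma pY_iter_const_mul (c : ℝ) (g : ℝ × ℝ → ℝ) (n : ℕ) :
    pY^[n] (fun q => c * g q) = fun p => c * pY^[n] g p := by
  induction n with
  | zero => rfl
  | succ n ih =>
    rw [Function.iterate_succ_apply', Function.iterate_succ_apply', ih, pY_const_mul]

/-- swap one `pX` past `n` iterations of `pY`. -/
lemma swap1 {g : ℝ × ℝ → ℝ} (hg : SmU g) (n : ℕ) :
    ∀ p ∈ sU, pY^[n] (pX g) p = pX (pY^[n] g) p := by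
  induction n generalizing g with
  | zero => intro p _; rfl
  | succ n ih =>
    intro p hp
    rw [Function.iterate_succ_apply, Function.iterate_succ_apply]
    calc pY^[n] (pY (pX g)) p = pY^[n] (pX (pY g)) p := by
          apply pY_iter_congrU (fun q hq => (clairaut hg hq).symm) n p hp
      _ = pX (pY^[n] (pY g)) p := ih (smU_pY hg) p hp

/-- swap `j` iterations of `pX` past `n` iterations of `pY`. -/
lemma swapIter {g : ℝ × ℝ → ℝ} (hg : SmU g) (n j : ℕ) :
    ∀ p ∈ sU, pY^[n] (pX^[j] g) p = pX^[j] (pY^[n] g) p := by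
  induction j generalizing g with
  | zero => intro p _; rfl
  | succ j ih =>
    intro p hp
    rw [Function.iterate_succ_apply, Function.iterate_succ_apply]
    calc pY^[n] (pX^[j] (pX g)) p = pX^[j] (pY^[n] (pX g)) p := ih (smU_pX hg) p hp
      _ = pX^[j] (pX (pY^[n] g)) p :=
          pX_iter_congrU (fun q hq => swap1 hg n q hq) j p hp

lemma iter_two {α : Type*} (f : α → α) (x : α) : f^[2] x = f (f x) := by
  rw [show (2:ℕ) = 1+1 from rfl, Function.iterate_add_apply, Function.iterate_one]

/-- `g` satisfies the Laplace equation on `sU`. -/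
def HarmU (g : ℝ × ℝ → ℝ) : Prop := ∀ p ∈ sU, pY (pY g) p = -(pX (pX g) p)

lemma harmU_pY {g : ℝ × ℝ → ℝ} (hg : SmU g) (hh : HarmU g) : HarmU (pY g) := by
  intro p hp
  have hsw : pY (pX (pX g)) p = pX (pX (pY g)) p := by
    have h := swapIter hg 1 2 p hp
    simpa [iter_two, Function.iterate_one] using h
  calc pY (pY (pY g)) p
      = pY (fun q => (-1:ℝ) * pX (pX g) q) p :=
        pY_congrU (fun q hq => by rw [hh q hq]; ring) hp
    _ = (-1:ℝ) * pY (pX (pX g)) p := by rw [pY_const_mul]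
    _ = -(pX (pX (pY g)) p) := by rw [hsw]; ring

lemma even_formula {g : ℝ × ℝ → ℝ} (hg : SmU g) (hh : HarmU g) (m : ℕ) :
    ∀ p ∈ sU, pY^[2*m] g p = (-1 : ℝ)^m * pX^[2*m] g p := by
  induction m with
  | zero => intro p _; simp
  | succ m ih =>
    intro p hp
    rw [show 2*(m+1) = 2*m + 2 from by ring]
    calc pY^[2*m+2] g p
        = pY^[2*m] (pY^[2] g) p := by rw [Function.iterate_add_apply]
      _ = pY^[2*m] (fun q => (-1:ℝ) * pX^[2] g q) p :=
          pY_iter_congrU (fun q hq => by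
            rw [iter_two pY, hh q hq, iter_two pX]; ring) (2*m) p hp
      _ = (-1:ℝ) * pY^[2*m] (pX^[2] g) p := by rw [pY_iter_const_mul]
      _ = (-1:ℝ) * pX^[2] (pY^[2*m] g) p := by rw [swapIter hg (2*m) 2 p hp]
      _ = (-1:ℝ) * pX^[2] (fun q => (-1:ℝ)^m * pX^[2*m] g q) p := by
          rw [pX_iter_congrU ih 2 p hp]
      _ = (-1:ℝ) * ((-1:ℝ)^m * pX^[2] (pX^[2*m] g) p) := by rw [pX_iter_const_mul]
      _ = (-1:ℝ)^(m+1) * pX^[2*m+2] g p := by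
          rw [add_comm (2*m) 2, Function.iterate_add_apply]; ring

lemma odd_formula {g : ℝ × ℝ → ℝ} (hg : SmU g) (hh : HarmU g) (m : ℕ) :
    ∀ p ∈ sU, pY^[2*m+1] g p = (-1 : ℝ)^m * pX^[2*m] (pY g) p := by
  intro p hp
  rw [Function.iterate_succ_apply]
  exact even_formula (smU_pY hg) (harmU_pY hg hh) m p hp


lemma pX_iter_slice (g : ℝ × ℝ → ℝ) (j : ℕ) (Y : ℝ) :
    (fun x => pX^[j] g (x, Y)) = iteratedDeriv j (fun x => g (x, Y)) := by
  induction j generalizing g with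
  | zero => simp
  | succ j ih =>
    rw [Function.iterate_succ_apply, ih (pX g), iteratedDeriv_succ']
    rfl

lemma pY_iter_slice (g : ℝ × ℝ → ℝ) (j : ℕ) (x : ℝ) :
    (fun t => pY^[j] g (x, t)) = iteratedDeriv j (fun t => g (x, t)) := by
  induction j generalizing g with
  | zero => simp
  | succ j ih =>
    rw [Function.iterate_succ_apply, ih (pY g), iteratedDeriv_succ']
    rfl

lemma idw_Ici {k : ℕ} {g : ℝ → ℝ} {Y : ℝ} (hY : 0 < Y) :
    iteratedDerivWithin k g (Ici 0) Y = iteratedDeriv k g Y := by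
  rw [iteratedDerivWithin_eq_iteratedFDerivWithin, iteratedDeriv_eq_iteratedFDeriv]
  congr 1
  have h1 := iteratedFDerivWithin_inter (𝕜 := ℝ) (f := g) (n := k) (s := univ)
    (x := Y) (Ici_mem_nhds hY)
  rw [Set.univ_inter] at h1
  rw [h1, iteratedFDerivWithin_univ]

lemma extend_bound {φ : ℝ → ℝ} {B : ℝ} (hc : ContinuousWithinAt φ (Ici 0) 0)
    (hb : ∀ y : ℝ, 0 < y → |φ y| ≤ B) : |φ 0| ≤ B := by
  have h1 : Tendsto φ (nhdsWithin (0:ℝ) (Ioi 0)) (nhds (φ 0)) :=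
    hc.tendsto.mono_left (nhdsWithin_mono _ Ioi_subset_Ici_self)
  have h2 : Tendsto (fun y => |φ y|) (nhdsWithin (0:ℝ) (Ioi 0)) (nhds |φ 0|) := h1.abs
  exact le_of_tendsto h2 (eventually_nhdsWithin_of_forall fun y hy => hb y hy)

lemma sliceY_contDiffOn {v : ℝ → ℝ → ℝ}
    (hv : ContDiffOn ℝ (⊤ : ℕ∞) (fun p : ℝ × ℝ => v p.1 p.2) {p : ℝ × ℝ | 0 ≤ p.2})
    (x : ℝ) : ContDiffOn ℝ (⊤ : ℕ∞) (fun Y' => v x Y') (Ici 0) := by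
  have hline : ContDiff ℝ (⊤ : ℕ∞) (fun t : ℝ => ((x, t) : ℝ × ℝ)) :=
    contDiff_const.prodMk contDiff_id
  exact hv.comp hline.contDiffOn (fun t ht => ht)

lemma stmt8_main_i (k : ℕ) (A : ℕ → ℝ) (v : ℝ → ℝ → ℝ)
    (hv1 : ContDiffOn ℝ (⊤ : ℕ∞) (fun p : ℝ × ℝ => v p.1 p.2) {p : ℝ × ℝ | 0 ≤ p.2})
    (hv2 : ∀ x Y : ℝ, 0 < Y →
      deriv (fun x' => deriv (fun x'' => v x'' Y) x') x
        + deriv (fun Y' => deriv (fun Y'' => v x Y'') Y') Y = 0)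
    (h : ∀ j : ℕ, j ≤ 2*k → ∀ x : ℝ, 1 ≤ x → ∀ Y : ℝ, 0 ≤ Y →
      |iteratedDeriv j (fun x' => v x' Y) x| ≤ A j * x ^ (-(j:ℝ) - 1/2))
    (x : ℝ) (hx : 1 ≤ x) (Y : ℝ) (hY : 0 ≤ Y) :
    |iteratedDerivWithin k (fun Y' => v x Y') (Set.Ici 0) Y|
      ≤ (1 + ∑ j ∈ Finset.range (2*k+1), |A j|) * x ^ (-(k:ℝ) - 1/2) := by
  have hxpos : (0:ℝ) < x := lt_of_lt_of_le one_pos hx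
  have hsm : SmU (fun p : ℝ × ℝ => v p.1 p.2) := hv1.mono (fun p hp => (le_of_lt hp : (0:ℝ) ≤ p.2))
  set f : ℝ × ℝ → ℝ := fun p : ℝ × ℝ => v p.1 p.2 with hfdef
  have hharm : HarmU f := by
    intro p hp
    have h0 := hv2 p.1 p.2 hp
    have e1 : pX (pX f) p = deriv (fun x' => deriv (fun x'' => v x'' p.2) x') p.1 := rfl
    have e2 : pY (pY f) p = deriv (fun Y' => deriv (fun Y'' => v p.1 Y'') Y') p.2 := rfl
    rw [e1, e2]; linarith
  have hApos : ∀ j, j ≤ 2*k → 0 ≤ A j := by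
    intro j hj
    have h1 := h j hj 1 le_rfl 0 le_rfl
    rw [Real.one_rpow, mul_one] at h1
    exact le_trans (abs_nonneg _) h1
  have hAC : ∀ j, j ≤ 2*k → A j ≤ 1 + ∑ i ∈ Finset.range (2*k+1), |A i| := by
    intro j hj
    have h1 : |A j| ≤ ∑ i ∈ Finset.range (2*k+1), |A i| :=
      Finset.single_le_sum (fun i _ => abs_nonneg (A i)) (Finset.mem_range.2 (by omega))
    have := le_abs_self (A j)
    linarith
  have hCpos : (0:ℝ) ≤ 1 + ∑ i ∈ Finset.range (2*k+1), |A i| := by positivity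
  have hrpow : (0:ℝ) < x ^ (-(k:ℝ) - 1/2) := Real.rpow_pos_of_pos hxpos _
  -- interior bound
  have interior : ∀ Z : ℝ, 0 < Z →
      |pY^[k] f (x, Z)| ≤ (1 + ∑ j ∈ Finset.range (2*k+1), |A j|) * x ^ (-(k:ℝ) - 1/2) := by
    intro Z hZ
    have hpU : ((x, Z) : ℝ × ℝ) ∈ sU := hZ
    rcases Nat.even_or_odd k with hke | hko
    · -- even case
      obtain ⟨m, hm⟩ := hke
      have hm2 : k = 2*m := by omega
      subst hm2
      have e := even_formula hsm hharm m (x, Z) hpU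
      have e2 : pX^[2*m] f (x, Z) = iteratedDeriv (2*m) (fun x' => v x' Z) x :=
        congrFun (pX_iter_slice f (2*m) Z) x
      rw [e, abs_mul, abs_pow, abs_neg, abs_one, one_pow, one_mul, e2]
      have hb := h (2*m) (by omega) x hx Z (le_of_lt hZ)
      calc |iteratedDeriv (2*m) (fun x' => v x' Z) x|
          ≤ A (2*m) * x ^ (-((2*m : ℕ):ℝ) - 1/2) := hb
        _ ≤ (1 + ∑ j ∈ Finset.range (2*(2*m)+1), |A j|) * x ^ (-((2*m : ℕ):ℝ) - 1/2) := by
            apply mul_le_mul_of_nonneg_right (hAC (2*m) (by omega))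
            positivity
    · -- odd case
      obtain ⟨m, hm⟩ := hko
      subst hm
      set a := A (2*m) with ha
      set b := A (2*m+2) with hb'
      have han : 0 ≤ a := hApos (2*m) (by omega)
      have hbn : 0 ≤ b := hApos (2*m+2) (by omega)
      set M0 := a * x ^ (-((2*m : ℕ):ℝ) - 1/2) with hM0
      set M2 := b * x ^ (-((2*m+2 : ℕ):ℝ) - 1/2) with hM2
      have hM0n : 0 ≤ M0 := by rw [hM0]; positivity
      have hM2n : 0 ≤ M2 := by rw [hM2]; positivity
      have hsmx : SmU (pX^[2*m] f) := smU_pX_iter hsm (2*m)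
      have hd1 : ∀ t : ℝ, 0 < t →
          HasDerivAt (fun t => pX^[2*m] f (x, t)) (pY (pX^[2*m] f) (x, t)) t :=
        fun t ht => smU_hasDerivAt_pY hsmx (show ((x, t) : ℝ × ℝ) ∈ sU from ht)
      have hd2 : ∀ t : ℝ, 0 < t →
          HasDerivAt (fun t => pY (pX^[2*m] f) (x, t)) (pY (pY (pX^[2*m] f)) (x, t)) t :=
        fun t ht => smU_hasDerivAt_pY (smU_pY hsmx) (show ((x, t) : ℝ × ℝ) ∈ sU from ht)
      have hb0 : ∀ t : ℝ, 0 < t → |pX^[2*m] f (x, t)| ≤ M0 := by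
        intro t ht
        have e2 : pX^[2*m] f (x, t) = iteratedDeriv (2*m) (fun x' => v x' t) x :=
          congrFun (pX_iter_slice f (2*m) t) x
        rw [e2]
        exact h (2*m) (by omega) x hx t (le_of_lt ht)
      have hc2 : ∀ q ∈ sU, pY (pY (pX^[2*m] f)) q = -(pX^[2*m+2] f q) := by
        intro q hq
        have s1 : pY (pY (pX^[2*m] f)) q = pY^[2] (pX^[2*m] f) q := by rw [iter_two pY]
        rw [s1, swapIter hsm 2 (2*m) q hq]
        have s2 : ∀ r ∈ sU, pY^[2] f r = (-1:ℝ) * pX^[2] f r := fun r hr => by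
          rw [iter_two pY, hharm r hr, iter_two pX]; ring
        rw [pX_iter_congrU s2 (2*m) q hq, pX_iter_const_mul,
          show (2*m+2) = 2*m + 2 from rfl, Function.iterate_add_apply]
        ring
      have hb2 : ∀ t : ℝ, 0 < t → |pY (pY (pX^[2*m] f)) (x, t)| ≤ M2 := by
        intro t ht
        rw [hc2 (x, t) (show ((x, t) : ℝ × ℝ) ∈ sU from ht), abs_neg]
        have e2 : pX^[2*m+2] f (x, t) = iteratedDeriv (2*m+2) (fun x' => v x' t) x :=
          congrFun (pX_iter_slice f (2*m+2) t) x
        rw [e2]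
        exact h (2*m+2) (by omega) x hx t (le_of_lt ht)
      have hland := stmt8_landau hM0n hM2n hb0 hd1 hd2 hb2 Z hZ
      -- identify pY^[k] f with the derivative bounded by landau
      have hodd := odd_formula hsm hharm m (x, Z) hpU
      have hsw : pX^[2*m] (pY f) (x, Z) = pY (pX^[2*m] f) (x, Z) := by
        have h3 := swapIter hsm 1 (2*m) (x, Z) hpU
        simpa [Function.iterate_one] using h3.symm
      rw [hodd, hsw, abs_mul, abs_pow, abs_neg, abs_one, one_pow, one_mul]
      -- arithmetic
      have hMeq : M0 * M2 = (a*b) * x ^ ((-((2*m : ℕ):ℝ) - 1/2) + (-((2*m+2 : ℕ):ℝ) - 1/2)) := by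
        rw [Real.rpow_add hxpos, hM0, hM2]; ring
      have hsqx : Real.sqrt (x ^ ((-((2*m : ℕ):ℝ) - 1/2) + (-((2*m+2 : ℕ):ℝ) - 1/2)))
          = x ^ (-((2*m+1 : ℕ):ℝ) - 1/2) := by
        rw [Real.sqrt_eq_rpow, ← Real.rpow_mul hxpos.le]
        congr 1
        push_cast
        ring
      have hpair : |A (2*m)| + |A (2*m+2)| ≤ ∑ i ∈ Finset.range (2*(2*m+1)+1), |A i| := by
        have hsub : ({2*m, 2*m+2} : Finset ℕ) ⊆ Finset.range (2*(2*m+1)+1) := by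
          intro i hi
          simp only [Finset.mem_insert, Finset.mem_singleton] at hi
          rcases hi with h'|h' <;> (rw [Finset.mem_range]; omega)
        have h4 := Finset.sum_le_sum_of_subset_of_nonneg hsub
          (fun i _ _ => abs_nonneg (A i))
        rwa [Finset.sum_pair (by omega : 2*m ≠ 2*m+2)] at h4
      have hab : Real.sqrt (a*b) ≤ (a+b)/2 := by
        have h1 : a*b ≤ ((a+b)/2)^2 := by nlinarith [sq_nonneg (a-b)]
        calc Real.sqrt (a*b) ≤ Real.sqrt (((a+b)/2)^2) := Real.sqrt_le_sqrt h1
          _ = (a+b)/2 := Real.sqrt_sq (by linarith)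
      have hsum : a + b ≤ 1 + ∑ i ∈ Finset.range (2*(2*m+1)+1), |A i| := by
        have := le_abs_self a
        have := le_abs_self b
        rw [ha, hb'] at *
        linarith
      calc |pY (pX^[2*m] f) (x, Z)| ≤ 2 * Real.sqrt (M0 * M2) := hland
        _ = 2 * (Real.sqrt (a*b) * x ^ (-((2*m+1 : ℕ):ℝ) - 1/2)) := by
            rw [hMeq, Real.sqrt_mul (mul_nonneg han hbn), hsqx]
        _ ≤ (1 + ∑ j ∈ Finset.range (2*(2*m+1)+1), |A j|) * x ^ (-((2*m+1 : ℕ):ℝ) - 1/2) := by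
            nlinarith [hrpow, Real.sqrt_nonneg (a*b)]
  -- conclude
  have hgc : ContDiffOn ℝ (⊤ : ℕ∞) (fun Y' => v x Y') (Set.Ici 0) := sliceY_contDiffOn hv1 x
  have hinner : ∀ Z : ℝ, 0 < Z →
      |iteratedDerivWithin k (fun Y' => v x Y') (Set.Ici 0) Z|
        ≤ (1 + ∑ j ∈ Finset.range (2*k+1), |A j|) * x ^ (-(k:ℝ) - 1/2) := by
    intro Z hZ
    rw [idw_Ici hZ]
    have e : iteratedDeriv k (fun Y' => v x Y') Z = pY^[k] f (x, Z) :=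
      (congrFun (pY_iter_slice f k x) Z).symm
    rw [e]
    exact interior Z hZ
  rcases eq_or_lt_of_le hY with hY0 | hYpos
  · rw [← hY0]
    have hcont : ContinuousWithinAt
        (iteratedDerivWithin k (fun Y' => v x Y') (Set.Ici 0)) (Set.Ici 0) 0 :=
      (hgc.continuousOn_iteratedDerivWithin (mod_cast le_top)
        (uniqueDiffOn_Ici 0)).continuousWithinAt Set.self_mem_Ici
    exact extend_bound hcont hinner
  · exact hinner Y hYpos


lemma stmt8_main_ii (v : ℝ → ℝ → ℝ) (A : ℕ → ℝ)
    (hv1 : ContDiffOn ℝ (⊤ : ℕ∞) (fun p : ℝ × ℝ => v p.1 p.2) {p : ℝ × ℝ | 0 ≤ p.2})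
    (hv2 : ∀ x Y : ℝ, 0 < Y →
      deriv (fun x' => deriv (fun x'' => v x'' Y) x') x
        + deriv (fun Y' => deriv (fun Y'' => v x Y'') Y') Y = 0)
    (h : ∀ j : ℕ, j ≤ 2 → ∀ x : ℝ, 1 ≤ x → ∀ Y : ℝ, 0 ≤ Y →
      |iteratedDeriv j (fun x' => v x' Y) x| ≤ A j * x ^ (-(j:ℝ) - 1/2))
    (x : ℝ) (hx : 1 ≤ x) (Y : ℝ) (hY : 0 ≤ Y) :
    |derivWithin (fun Y' => v x Y') (Set.Ici 0) Y|
      ≤ 2 * Real.sqrt (A 0 * A 2) * x ^ (-(3:ℝ)/2) := by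
  have hxpos : (0:ℝ) < x := lt_of_lt_of_le one_pos hx
  have hsm : SmU (fun p : ℝ × ℝ => v p.1 p.2) :=
    hv1.mono (fun p hp => (le_of_lt hp : (0:ℝ) ≤ p.2))
  set f : ℝ × ℝ → ℝ := fun p : ℝ × ℝ => v p.1 p.2 with hfdef
  have hharm : HarmU f := by
    intro p hp
    have h0 := hv2 p.1 p.2 hp
    have e1 : pX (pX f) p = deriv (fun x' => deriv (fun x'' => v x'' p.2) x') p.1 := rfl
    have e2 : pY (pY f) p = deriv (fun Y' => deriv (fun Y'' => v p.1 Y'') Y') p.2 := rfl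
    rw [e1, e2]; linarith
  have hA0 : 0 ≤ A 0 := by
    have h1 := h 0 (by norm_num) 1 le_rfl 0 le_rfl
    rw [Real.one_rpow, mul_one] at h1
    exact le_trans (abs_nonneg _) h1
  have hA2 : 0 ≤ A 2 := by
    have h1 := h 2 le_rfl 1 le_rfl 0 le_rfl
    rw [Real.one_rpow, mul_one] at h1
    exact le_trans (abs_nonneg _) h1
  set M0 := A 0 * x ^ (-((0:ℕ):ℝ) - 1/2) with hM0
  set M2 := A 2 * x ^ (-((2:ℕ):ℝ) - 1/2) with hM2
  have hM0n : 0 ≤ M0 := by rw [hM0]; positivity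
  have hM2n : 0 ≤ M2 := by rw [hM2]; positivity
  have hb0 : ∀ t : ℝ, 0 < t → |f (x, t)| ≤ M0 := by
    intro t ht
    have h1 := h 0 (by norm_num) x hx t (le_of_lt ht)
    rw [iteratedDeriv_zero] at h1
    exact h1
  have hd1 : ∀ t : ℝ, 0 < t → HasDerivAt (fun t => f (x, t)) (pY f (x, t)) t :=
    fun t ht => smU_hasDerivAt_pY hsm (show ((x, t) : ℝ × ℝ) ∈ sU from ht)
  have hd2 : ∀ t : ℝ, 0 < t →
      HasDerivAt (fun t => pY f (x, t)) (pY (pY f) (x, t)) t :=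
    fun t ht => smU_hasDerivAt_pY (smU_pY hsm) (show ((x, t) : ℝ × ℝ) ∈ sU from ht)
  have hb2 : ∀ t : ℝ, 0 < t → |pY (pY f) (x, t)| ≤ M2 := by
    intro t ht
    rw [hharm (x, t) (show ((x, t) : ℝ × ℝ) ∈ sU from ht), abs_neg]
    have e1 : pX (pX f) (x, t) = pX^[2] f (x, t) := by rw [iter_two pX]
    have e2 : pX^[2] f (x, t) = iteratedDeriv 2 (fun x' => v x' t) x :=
      congrFun (pX_iter_slice f 2 t) x
    rw [e1, e2]
    exact h 2 le_rfl x hx t (le_of_lt ht)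
  have hland := stmt8_landau hM0n hM2n hb0 hd1 hd2 hb2
  have hMeq : 2 * Real.sqrt (M0 * M2)
      = 2 * Real.sqrt (A 0 * A 2) * x ^ (-(3:ℝ)/2) := by
    have e1 : M0 * M2 = (A 0 * A 2) * x ^ ((-((0:ℕ):ℝ) - 1/2) + (-((2:ℕ):ℝ) - 1/2)) := by
      rw [Real.rpow_add hxpos, hM0, hM2]; ring
    rw [e1, Real.sqrt_mul (mul_nonneg hA0 hA2)]
    have e2 : Real.sqrt (x ^ ((-((0:ℕ):ℝ) - 1/2) + (-((2:ℕ):ℝ) - 1/2)))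
        = x ^ (-(3:ℝ)/2) := by
      rw [Real.sqrt_eq_rpow, ← Real.rpow_mul hxpos.le]
      congr 1
      push_cast
      ring
    rw [e2]; ring
  have hinner : ∀ Z : ℝ, 0 < Z →
      |derivWithin (fun Y' => v x Y') (Set.Ici 0) Z|
        ≤ 2 * Real.sqrt (A 0 * A 2) * x ^ (-(3:ℝ)/2) := by
    intro Z hZ
    rw [derivWithin_of_mem_nhds (Ici_mem_nhds hZ)]
    have e : deriv (fun Y' => v x Y') Z = pY f (x, Z) := rfl
    rw [e, ← hMeq]
    exact hland Z hZ
  rcases eq_or_lt_of_le hY with hY0 | hYpos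
  · rw [← hY0]
    have hgc : ContDiffOn ℝ (⊤ : ℕ∞) (fun Y' => v x Y') (Set.Ici 0) :=
      sliceY_contDiffOn hv1 x
    have hcont : ContinuousWithinAt
        (derivWithin (fun Y' => v x Y') (Set.Ici 0)) (Set.Ici 0) 0 :=
      (hgc.continuousOn_derivWithin (uniqueDiffOn_Ici 0)
        (mod_cast le_top)).continuousWithinAt Set.self_mem_Ici
    exact extend_bound hcont hinner
  · exact hinner Y hYpos

end

/-- `v` is harmonic on the open upper half-plane and smooth up to the boundary `{Y = 0}`. -/
def HarmonicUpper (v : ℝ → ℝ → ℝ) : Prop :=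
  ContDiffOn ℝ (⊤ : ℕ∞) (fun p : ℝ × ℝ => v p.1 p.2) {p : ℝ × ℝ | 0 ≤ p.2} ∧
  ∀ x Y : ℝ, 0 < Y →
    deriv (fun x' => deriv (fun x'' => v x'' Y) x') x
      + deriv (fun Y' => deriv (fun Y'' => v x Y'') Y') Y = 0

theorem stmt8 :
    (∀ k : ℕ, 1 ≤ k → ∀ A : ℕ → ℝ, ∃ C > (0:ℝ), ∀ v : ℝ → ℝ → ℝ,
      HarmonicUpper v →
      (∀ j : ℕ, j ≤ 2*k → ∀ x : ℝ, 1 ≤ x → ∀ Y : ℝ, 0 ≤ Y →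
        |iteratedDeriv j (fun x' => v x' Y) x| ≤ A j * x ^ (-(j:ℝ) - 1/2)) →
      ∀ x : ℝ, 1 ≤ x → ∀ Y : ℝ, 0 ≤ Y →
        |iteratedDerivWithin k (fun Y' => v x Y') (Set.Ici 0) Y| ≤ C * x ^ (-(k:ℝ) - 1/2)) ∧
    (∃ C > (0:ℝ), ∀ v : ℝ → ℝ → ℝ, ∀ A : ℕ → ℝ,
      HarmonicUpper v →
      (∀ j : ℕ, j ≤ 2 → ∀ x : ℝ, 1 ≤ x → ∀ Y : ℝ, 0 ≤ Y →
        |iteratedDeriv j (fun x' => v x' Y) x| ≤ A j * x ^ (-(j:ℝ) - 1/2)) →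
      ∀ x : ℝ, 1 ≤ x → ∀ Y : ℝ, 0 ≤ Y →
        |derivWithin (fun Y' => v x Y') (Set.Ici 0) Y|
          ≤ C * Real.sqrt (A 0 * A 2) * x ^ (-(3:ℝ)/2)) := by
  constructor
  · intro k hk A
    refine ⟨1 + ∑ j ∈ Finset.range (2*k+1), |A j|, by positivity, ?_⟩
    intro v hv h x hx Y hY
    exact stmt8_main_i k A v hv.1 hv.2 h x hx Y hY
  · refine ⟨2, two_pos, ?_⟩
    intro v A hv h x hx Y hY
    exact stmt8_main_ii v A hv.1 hv.2 h x hx Y hY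
end

section
/- Let ε > 0 and let i ≥ 1 be an integer. For j = 1,…,i let (u^j, v^j) be differentiable functions on an open subset of ℝ² (variables (x,Y)), each pair satisfying the Cauchy–Riemann relations ∂_x u^j = −∂_Y v^j and ∂_Y u^j = ∂_x v^j. Define P := −Σ_{j=1}^{i−1} ε^{(j−i)/2} ( v^i v^j + u^i u^j ) − (1/2)( (v^i)² + (u^i)² ), E^u := ε^i ( u^i ∂_x u^i + v^i ∂_Y u^i ) + Σ_{j=1}^{i−1} ε^{(i+j)/2} ( (∂_x u^i) u^j + u^i ∂_x u^j + (∂_Y u^i) v^j + v^i ∂_Y u^j ), and E^v := ε^{i−1/2} ( u^i ∂_x v^i + v^i ∂_Y v^i ) + Σ_{j=1}^{i−1} ε^{(i+j−1)/2} ( u^i ∂_x v^j + (∂_x v^i) u^j + v^i ∂_Y v^j + (∂_Y v^i) v^j ). Then ∂_x ( ε^i P ) + E^u = 0 and ε^{−1/2} ∂_Y ( ε^i P ) + E^v = 0 pointwise. -/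
/-- Partial derivative in the first (tangential) variable. -/
noncomputable def pdx (f : ℝ → ℝ → ℝ) : ℝ → ℝ → ℝ := fun x Y => deriv (fun x' => f x' Y) x

/-- Partial derivative in the second (normal) variable. -/
noncomputable def pdy (f : ℝ → ℝ → ℝ) : ℝ → ℝ → ℝ := fun x Y => deriv (fun Y' => f x Y') Y

lemma hasDerivAt_slice_x (f : ℝ → ℝ → ℝ) (p : ℝ × ℝ)
    (h : DifferentiableAt ℝ (fun q : ℝ × ℝ => f q.1 q.2) p) :
    HasDerivAt (fun x => f x p.2) (pdx f p.1 p.2) p.1 := by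
  have h1 : DifferentiableAt ℝ (fun x : ℝ => ((x, p.2) : ℝ × ℝ)) p.1 :=
    DifferentiableAt.prodMk differentiableAt_id (differentiableAt_const _)
  have h2 : DifferentiableAt ℝ (fun x => f x p.2) p.1 := DifferentiableAt.comp (g := fun q : ℝ × ℝ => f q.1 q.2) p.1 h h1
  exact h2.hasDerivAt

lemma hasDerivAt_slice_y (f : ℝ → ℝ → ℝ) (p : ℝ × ℝ)
    (h : DifferentiableAt ℝ (fun q : ℝ × ℝ => f q.1 q.2) p) :
    HasDerivAt (fun Y => f p.1 Y) (pdy f p.1 p.2) p.2 := by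
  have h1 : DifferentiableAt ℝ (fun Y : ℝ => ((p.1, Y) : ℝ × ℝ)) p.2 :=
    DifferentiableAt.prodMk (differentiableAt_const _) differentiableAt_id
  have h2 : DifferentiableAt ℝ (fun Y => f p.1 Y) p.2 := DifferentiableAt.comp (g := fun q : ℝ × ℝ => f q.1 q.2) p.2 h h1
  exact h2.hasDerivAt

theorem stmt11 (ε : ℝ) (hε : 0 < ε) (i : ℕ) (hi : 1 ≤ i)
    (U : Set (ℝ × ℝ)) (hU : IsOpen U) (u v : ℕ → ℝ → ℝ → ℝ)
    (hdiff : ∀ j : ℕ, 1 ≤ j → j ≤ i → ∀ p ∈ U,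
      DifferentiableAt ℝ (fun q : ℝ × ℝ => u j q.1 q.2) p ∧
      DifferentiableAt ℝ (fun q : ℝ × ℝ => v j q.1 q.2) p)
    (hcr1 : ∀ j : ℕ, 1 ≤ j → j ≤ i → ∀ p ∈ U, pdx (u j) p.1 p.2 = - pdy (v j) p.1 p.2)
    (hcr2 : ∀ j : ℕ, 1 ≤ j → j ≤ i → ∀ p ∈ U, pdy (u j) p.1 p.2 = pdx (v j) p.1 p.2)
    (P Eu Ev : ℝ → ℝ → ℝ)
    (hP : ∀ x Y : ℝ, P x Y =
      -(∑ j ∈ Finset.Icc 1 (i-1), ε ^ (((j:ℝ) - (i:ℝ))/2) *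
          (v i x Y * v j x Y + u i x Y * u j x Y))
        - (1/2) * ((v i x Y)^2 + (u i x Y)^2))
    (hEu : ∀ x Y : ℝ, Eu x Y =
      ε ^ i * (u i x Y * pdx (u i) x Y + v i x Y * pdy (u i) x Y)
        + ∑ j ∈ Finset.Icc 1 (i-1), ε ^ (((i:ℝ) + (j:ℝ))/2) *
            (pdx (u i) x Y * u j x Y + u i x Y * pdx (u j) x Y
              + pdy (u i) x Y * v j x Y + v i x Y * pdy (u j) x Y))
    (hEv : ∀ x Y : ℝ, Ev x Y =
      ε ^ ((i:ℝ) - 1/2) * (u i x Y * pdx (v i) x Y + v i x Y * pdy (v i) x Y)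
        + ∑ j ∈ Finset.Icc 1 (i-1), ε ^ (((i:ℝ) + (j:ℝ) - 1)/2) *
            (u i x Y * pdx (v j) x Y + pdx (v i) x Y * u j x Y
              + v i x Y * pdy (v j) x Y + pdy (v i) x Y * v j x Y)) :
    ∀ p ∈ U,
      pdx (fun x Y => ε ^ i * P x Y) p.1 p.2 + Eu p.1 p.2 = 0 ∧
      ε ^ (-(1:ℝ)/2) * pdy (fun x Y => ε ^ i * P x Y) p.1 p.2 + Ev p.1 p.2 = 0 := by
  intro p hp
  obtain ⟨a, b⟩ := p
  -- slice derivatives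
  have hux : ∀ j, 1 ≤ j → j ≤ i → HasDerivAt (fun x => u j x b) (pdx (u j) a b) a :=
    fun j h1 h2 => hasDerivAt_slice_x (u j) (a, b) ((hdiff j h1 h2 (a, b) hp).1)
  have hvx : ∀ j, 1 ≤ j → j ≤ i → HasDerivAt (fun x => v j x b) (pdx (v j) a b) a :=
    fun j h1 h2 => hasDerivAt_slice_x (v j) (a, b) ((hdiff j h1 h2 (a, b) hp).2)
  have huy : ∀ j, 1 ≤ j → j ≤ i → HasDerivAt (fun Y => u j a Y) (pdy (u j) a b) b :=
    fun j h1 h2 => hasDerivAt_slice_y (u j) (a, b) ((hdiff j h1 h2 (a, b) hp).1)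
  have hvy : ∀ j, 1 ≤ j → j ≤ i → HasDerivAt (fun Y => v j a Y) (pdy (v j) a b) b :=
    fun j h1 h2 => hasDerivAt_slice_y (v j) (a, b) ((hdiff j h1 h2 (a, b) hp).2)
  have hji : ∀ j ∈ Finset.Icc 1 (i - 1), 1 ≤ j ∧ j ≤ i := by
    intro j hj
    rw [Finset.mem_Icc] at hj
    exact ⟨hj.1, hj.2.trans (Nat.sub_le i 1)⟩
  have hc2 : ∀ j, 1 ≤ j → j ≤ i → pdy (u j) a b = pdx (v j) a b :=
    fun j h1 h2 => hcr2 j h1 h2 (a, b) hp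
  -- exponent identities
  have hexp : ∀ j : ℕ, ε ^ (((i:ℝ) + (j:ℝ))/2) = ε ^ i * ε ^ (((j:ℝ) - (i:ℝ))/2) := by
    intro j
    rw [show ((i:ℝ) + (j:ℝ))/2 = (i:ℝ) + ((j:ℝ) - (i:ℝ))/2 by ring, Real.rpow_add hε,
      Real.rpow_natCast]
  have hlead : ε ^ ((i:ℝ) - 1/2) = ε ^ (-(1:ℝ)/2) * ε ^ i := by
    rw [show (i:ℝ) - 1/2 = -(1:ℝ)/2 + (i:ℝ) by ring, Real.rpow_add hε, Real.rpow_natCast]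
  have hexp2 : ∀ j : ℕ, ε ^ (((i:ℝ) + (j:ℝ) - 1)/2)
      = ε ^ (-(1:ℝ)/2) * (ε ^ i * ε ^ (((j:ℝ) - (i:ℝ))/2)) := by
    intro j
    rw [show ((i:ℝ) + (j:ℝ) - 1)/2 = -(1:ℝ)/2 + ((i:ℝ) + ((j:ℝ) - (i:ℝ))/2) by ring,
      Real.rpow_add hε, Real.rpow_add hε, Real.rpow_natCast]
  constructor
  · -- x-equation
    have h1 : HasDerivAt
        (fun x => ∑ j ∈ Finset.Icc 1 (i - 1), ε ^ (((j:ℝ) - (i:ℝ))/2) *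
          (v i x b * v j x b + u i x b * u j x b))
        (∑ j ∈ Finset.Icc 1 (i - 1), ε ^ (((j:ℝ) - (i:ℝ))/2) *
          (pdx (v i) a b * v j a b + v i a b * pdx (v j) a b +
            (pdx (u i) a b * u j a b + u i a b * pdx (u j) a b))) a := by
      refine HasDerivAt.fun_sum fun j hj => ?_
      obtain ⟨h1j, h2j⟩ := hji j hj
      exact (((hvx i hi le_rfl).mul (hvx j h1j h2j)).add
        ((hux i hi le_rfl).mul (hux j h1j h2j))).const_mul _
    have h2 : HasDerivAt (fun x => (v i x b) ^ 2 + (u i x b) ^ 2)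
        ((2:ℕ) * v i a b ^ (2-1) * pdx (v i) a b + (2:ℕ) * u i a b ^ (2-1) * pdx (u i) a b)
        a := ((hvx i hi le_rfl).pow 2).add ((hux i hi le_rfl).pow 2)
    have hPx := ((h1.fun_neg.fun_sub (h2.const_mul (1/2 : ℝ))).const_mul (ε ^ i))
    have hfun : (fun x => ε ^ i * P x b)
        = fun x => ε ^ i * (-(∑ j ∈ Finset.Icc 1 (i - 1), ε ^ (((j:ℝ) - (i:ℝ))/2) *
            (v i x b * v j x b + u i x b * u j x b))
          - (1/2) * ((v i x b) ^ 2 + (u i x b) ^ 2)) := funext fun x => by rw [hP]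
    rw [← hfun] at hPx
    have hdx : pdx (fun x Y => ε ^ i * P x Y) a b = ε ^ i *
        (-(∑ j ∈ Finset.Icc 1 (i - 1), ε ^ (((j:ℝ) - (i:ℝ))/2) *
          (pdx (v i) a b * v j a b + v i a b * pdx (v j) a b +
            (pdx (u i) a b * u j a b + u i a b * pdx (u j) a b)))
          - 1/2 * ((2:ℕ) * v i a b ^ (2-1) * pdx (v i) a b
              + (2:ℕ) * u i a b ^ (2-1) * pdx (u i) a b)) := hPx.deriv
    show pdx (fun x Y => ε ^ i * P x Y) a b + Eu a b = 0
    rw [hdx, hEu]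
    have hS : ∑ j ∈ Finset.Icc 1 (i - 1), ε ^ (((i:ℝ) + (j:ℝ))/2) *
          (pdx (u i) a b * u j a b + u i a b * pdx (u j) a b
            + pdy (u i) a b * v j a b + v i a b * pdy (u j) a b)
        = ε ^ i * ∑ j ∈ Finset.Icc 1 (i - 1), ε ^ (((j:ℝ) - (i:ℝ))/2) *
          (pdx (v i) a b * v j a b + v i a b * pdx (v j) a b +
            (pdx (u i) a b * u j a b + u i a b * pdx (u j) a b)) := by
      rw [Finset.mul_sum]
      refine Finset.sum_congr rfl fun j hj => ?_
      obtain ⟨h1j, h2j⟩ := hji j hj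
      rw [hc2 j h1j h2j, hc2 i hi le_rfl, hexp j]
      ring
    rw [hS, hc2 i hi le_rfl]
    ring
  · -- y-equation
    have h1 : HasDerivAt
        (fun Y => ∑ j ∈ Finset.Icc 1 (i - 1), ε ^ (((j:ℝ) - (i:ℝ))/2) *
          (v i a Y * v j a Y + u i a Y * u j a Y))
        (∑ j ∈ Finset.Icc 1 (i - 1), ε ^ (((j:ℝ) - (i:ℝ))/2) *
          (pdy (v i) a b * v j a b + v i a b * pdy (v j) a b +
            (pdy (u i) a b * u j a b + u i a b * pdy (u j) a b))) b := by
      refine HasDerivAt.fun_sum fun j hj => ?_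
      obtain ⟨h1j, h2j⟩ := hji j hj
      exact (((hvy i hi le_rfl).mul (hvy j h1j h2j)).add
        ((huy i hi le_rfl).mul (huy j h1j h2j))).const_mul _
    have h2 : HasDerivAt (fun Y => (v i a Y) ^ 2 + (u i a Y) ^ 2)
        ((2:ℕ) * v i a b ^ (2-1) * pdy (v i) a b + (2:ℕ) * u i a b ^ (2-1) * pdy (u i) a b)
        b := ((hvy i hi le_rfl).pow 2).add ((huy i hi le_rfl).pow 2)
    have hPy := ((h1.fun_neg.fun_sub (h2.const_mul (1/2 : ℝ))).const_mul (ε ^ i))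
    have hfun : (fun Y => ε ^ i * P a Y)
        = fun Y => ε ^ i * (-(∑ j ∈ Finset.Icc 1 (i - 1), ε ^ (((j:ℝ) - (i:ℝ))/2) *
            (v i a Y * v j a Y + u i a Y * u j a Y))
          - (1/2) * ((v i a Y) ^ 2 + (u i a Y) ^ 2)) := funext fun Y => by rw [hP]
    rw [← hfun] at hPy
    have hdy : pdy (fun x Y => ε ^ i * P x Y) a b = ε ^ i *
        (-(∑ j ∈ Finset.Icc 1 (i - 1), ε ^ (((j:ℝ) - (i:ℝ))/2) *
          (pdy (v i) a b * v j a b + v i a b * pdy (v j) a b +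
            (pdy (u i) a b * u j a b + u i a b * pdy (u j) a b)))
          - 1/2 * ((2:ℕ) * v i a b ^ (2-1) * pdy (v i) a b
              + (2:ℕ) * u i a b ^ (2-1) * pdy (u i) a b)) := hPy.deriv
    show ε ^ (-(1:ℝ)/2) * pdy (fun x Y => ε ^ i * P x Y) a b + Ev a b = 0
    rw [hdy, hEv, hlead]
    have hS : ∑ j ∈ Finset.Icc 1 (i - 1), ε ^ (((i:ℝ) + (j:ℝ) - 1)/2) *
          (u i a b * pdx (v j) a b + pdx (v i) a b * u j a b
            + v i a b * pdy (v j) a b + pdy (v i) a b * v j a b)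
        = ε ^ (-(1:ℝ)/2) * (ε ^ i * ∑ j ∈ Finset.Icc 1 (i - 1), ε ^ (((j:ℝ) - (i:ℝ))/2) *
          (pdy (v i) a b * v j a b + v i a b * pdy (v j) a b +
            (pdy (u i) a b * u j a b + u i a b * pdy (u j) a b))) := by
      rw [Finset.mul_sum, Finset.mul_sum]
      refine Finset.sum_congr rfl fun j hj => ?_
      obtain ⟨h1j, h2j⟩ := hji j hj
      rw [hc2 j h1j h2j, hc2 i hi le_rfl, hexp2 j]
      ring
    rw [hS, hc2 i hi le_rfl]
    ring
end

section
/- For every κ ∈ (0, 1/2) there is a constant C(κ) such that for every continuously differentiable function v : (0,∞) → ℝ with v(y) → 0 as y → ∞: sup_{y > 0} |v(y)|² ≤ C(κ) ( ∫₀^∞ y^{1−2κ} v'(y)² dy )^{1/2} ( ∫₀^∞ y^{1+2κ} v'(y)² dy )^{1/2}. -/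
open MeasureTheory Set Filter
open scoped ENNReal

lemma cs_aux {f : ℝ → ℝ} (hf : Measurable f) {s : Set ℝ} (hs : MeasurableSet s)
    (hs0 : s ⊆ Ioi 0) (c : ℝ) :
    (∫⁻ t in s, ENNReal.ofReal |f t|)
      ≤ (∫⁻ t in s, ENNReal.ofReal (t ^ c * (f t)^2)) ^ ((1:ℝ)/2) *
        (∫⁻ t in s, ENNReal.ofReal (t ^ (-c))) ^ ((1:ℝ)/2) := by
  have hconj : (2:ℝ).HolderConjugate 2 := Real.HolderConjugate.two_two
  have hφm : AEMeasurable (fun t => ENNReal.ofReal (t ^ (c/2) * |f t|)) (volume.restrict s) :=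
    (((measurable_id.pow_const _).mul hf.abs).ennreal_ofReal).aemeasurable
  have hψm : AEMeasurable (fun t => ENNReal.ofReal (t ^ (-(c/2)))) (volume.restrict s) :=
    ((measurable_id.pow_const _).ennreal_ofReal).aemeasurable
  have hae : ∀ᵐ t ∂(volume.restrict s), t ∈ s := ae_restrict_mem hs
  have h1 : (∫⁻ t in s, ENNReal.ofReal |f t|)
      = ∫⁻ t in s, ((fun t => ENNReal.ofReal (t ^ (c/2) * |f t|)) *
          (fun t => ENNReal.ofReal (t ^ (-(c/2))))) t := by
    refine lintegral_congr_ae (hae.mono fun t ht => ?_)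
    have htpos : (0:ℝ) < t := hs0 ht
    simp only [Pi.mul_apply]
    rw [← ENNReal.ofReal_mul (by positivity)]
    congr 1
    rw [mul_comm (t ^ (c/2)) |f t|, mul_assoc, ← Real.rpow_add htpos]
    simp
  have h2 : (∫⁻ t in s, ENNReal.ofReal (t ^ (c/2) * |f t|) ^ (2:ℝ))
      = ∫⁻ t in s, ENNReal.ofReal (t ^ c * (f t)^2) := by
    refine lintegral_congr_ae (hae.mono fun t ht => ?_)
    have htpos : (0:ℝ) < t := hs0 ht
    dsimp only
    rw [ENNReal.ofReal_rpow_of_nonneg (by positivity) (by norm_num)]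
    congr 1
    rw [Real.mul_rpow (by positivity) (abs_nonneg _), ← Real.rpow_mul htpos.le,
      Real.rpow_two, sq_abs, show c/2*2 = c by ring]
  have h3 : (∫⁻ t in s, ENNReal.ofReal (t ^ (-(c/2))) ^ (2:ℝ))
      = ∫⁻ t in s, ENNReal.ofReal (t ^ (-c)) := by
    refine lintegral_congr_ae (hae.mono fun t ht => ?_)
    have htpos : (0:ℝ) < t := hs0 ht
    dsimp only
    rw [ENNReal.ofReal_rpow_of_nonneg (by positivity) (by norm_num)]
    congr 1
    rw [← Real.rpow_mul htpos.le, show -(c/2)*2 = -c by ring]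
  rw [h1, ← h2, ← h3]
  exact ENNReal.lintegral_mul_le_Lp_mul_Lq _ hconj hφm hψm

lemma w1_aux {a R : ℝ} (ha : -1 < a) (hR : 0 < R) :
    (∫⁻ t in Ioc (0:ℝ) R, ENNReal.ofReal (t ^ a)) = ENNReal.ofReal (R ^ (a+1) / (a+1)) := by
  have hi : IntegrableOn (fun t : ℝ => t ^ a) (Ioc 0 R) :=
    (intervalIntegrable_iff_integrableOn_Ioc_of_le hR.le).mp
      (intervalIntegral.intervalIntegrable_rpow' ha)
  rw [← ofReal_integral_eq_lintegral_ofReal hi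
    ((ae_restrict_mem measurableSet_Ioc).mono fun t ht => Real.rpow_nonneg ht.1.le a)]
  congr 1
  rw [← intervalIntegral.integral_of_le hR.le, integral_rpow (Or.inl ha)]
  rw [Real.zero_rpow (by linarith)]
  ring

lemma w2_aux {a R : ℝ} (ha : a < -1) (hR : 0 < R) :
    (∫⁻ t in Ioi R, ENNReal.ofReal (t ^ a)) = ENNReal.ofReal (-R ^ (a+1) / (a+1)) := by
  have hi : IntegrableOn (fun t : ℝ => t ^ a) (Ioi R) := integrableOn_Ioi_rpow_of_lt ha hR
  rw [← ofReal_integral_eq_lintegral_ofReal hi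
    ((ae_restrict_mem measurableSet_Ioi).mono fun t ht =>
      Real.rpow_nonneg (hR.trans ht).le a)]
  congr 1
  exact integral_Ioi_rpow_of_lt ha hR

lemma ftc_aux {v : ℝ → ℝ} (hv : ContDiffOn ℝ 1 v (Set.Ioi 0))
    (hv0 : Tendsto v atTop (nhds 0))
    (hint : IntegrableOn (deriv v) (Ioi 0)) {y : ℝ} (hy : 0 < y) :
    |v y| ≤ ∫ t in Ioi (0:ℝ), |deriv v t| := by
  have hderiv : ∀ t ∈ Ioi (0:ℝ), HasDerivAt v (deriv v t) t := fun t ht =>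
    ((hv.differentiableOn one_ne_zero).differentiableAt (isOpen_Ioi.mem_nhds ht)).hasDerivAt
  have hIy : IntegrableOn (deriv v) (Ioi y) := hint.mono_set (Ioi_subset_Ioi hy.le)
  have t1 : Tendsto (fun b => ∫ t in y..b, deriv v t) atTop (nhds (∫ t in Ioi y, deriv v t)) :=
    intervalIntegral_tendsto_integral_Ioi y hIy tendsto_id
  have t2 : ∀ᶠ b in atTop, (∫ t in y..b, deriv v t) = v b - v y := by
    filter_upwards [eventually_ge_atTop y] with b hb
    refine intervalIntegral.integral_eq_sub_of_hasDerivAt (fun t ht => ?_) ?_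
    · refine hderiv t ?_
      rw [uIcc_of_le hb] at ht
      exact lt_of_lt_of_le hy ht.1
    · exact (intervalIntegrable_iff_integrableOn_Ioc_of_le hb).mpr
        (hIy.mono_set Ioc_subset_Ioi_self)
  have t3 : Tendsto (fun b => v b - v y) atTop (nhds (∫ t in Ioi y, deriv v t)) :=
    t1.congr' t2
  have t4 : Tendsto (fun b => v b - v y) atTop (nhds (0 - v y)) := hv0.sub_const (v y)
  have hvy : v y = -∫ t in Ioi y, deriv v t := by
    have h := tendsto_nhds_unique t3 t4
    rw [zero_sub] at h
    linarith [h]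
  rw [hvy, abs_neg]
  calc |∫ t in Ioi y, deriv v t| ≤ ∫ t in Ioi y, |deriv v t| := by
        simpa [Real.norm_eq_abs] using norm_integral_le_integral_norm
          (μ := volume.restrict (Ioi y)) (deriv v)
    _ ≤ ∫ t in Ioi (0:ℝ), |deriv v t| := by
        refine setIntegral_mono_set hint.abs
          ((ae_restrict_mem measurableSet_Ioi).mono fun t _ => abs_nonneg _)
          ((Ioi_subset_Ioi hy.le).eventuallyLE)

theorem stmt14 (κ : ℝ) (hκ0 : 0 < κ) (hκ1 : κ < 1/2) :
    ∃ C > (0:ℝ), ∀ v : ℝ → ℝ, ContDiffOn ℝ 1 v (Set.Ioi 0) →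
      Filter.Tendsto v Filter.atTop (nhds 0) →
      ∀ y : ℝ, 0 < y →
        ENNReal.ofReal ((v y)^2)
          ≤ ENNReal.ofReal C *
            (∫⁻ t in Set.Ioi (0:ℝ), ENNReal.ofReal (t ^ (1 - 2*κ) * (deriv v t)^2)) ^ ((1:ℝ)/2) *
            (∫⁻ t in Set.Ioi (0:ℝ), ENNReal.ofReal (t ^ (1 + 2*κ) * (deriv v t)^2)) ^ ((1:ℝ)/2) := by
  refine ⟨2/κ, by positivity, ?_⟩
  intro v hv hv0 y hy
  have hfm : Measurable (deriv v) := measurable_deriv v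
  set I₁ := ∫⁻ t in Set.Ioi (0:ℝ), ENNReal.ofReal (t ^ (1 - 2*κ) * (deriv v t)^2) with hI₁
  set I₂ := ∫⁻ t in Set.Ioi (0:ℝ), ENNReal.ofReal (t ^ (1 + 2*κ) * (deriv v t)^2) with hI₂
  -- if either integral vanishes, the derivative vanishes a.e.
  have hzero : ∀ c : ℝ,
      (∫⁻ t in Ioi (0:ℝ), ENNReal.ofReal (t ^ c * (deriv v t)^2)) = 0 →
      deriv v =ᵐ[volume.restrict (Ioi (0:ℝ))] 0 := by
    intro c hc
    have hm : Measurable fun t : ℝ => ENNReal.ofReal (t ^ c * (deriv v t)^2) :=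
      ((measurable_id.pow_const c).mul (hfm.pow_const 2)).ennreal_ofReal
    have h0 := (lintegral_eq_zero_iff hm).mp hc
    filter_upwards [h0, ae_restrict_mem measurableSet_Ioi] with t h1 h2
    have htpos : (0:ℝ) < t := h2
    simp only [Pi.zero_apply, ENNReal.ofReal_eq_zero] at h1 ⊢
    have h3 : (deriv v t)^2 = 0 := le_antisymm
      (by nlinarith [Real.rpow_pos_of_pos htpos c]) (sq_nonneg _)
    exact pow_eq_zero_iff two_ne_zero |>.mp h3
  by_cases htop : I₁ = ⊤ ∨ I₂ = ⊤
  · -- right-hand side is infinite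
    have hne1 : I₁ ≠ 0 := by
      intro h0
      have hf0 := hzero _ (hI₁ ▸ h0)
      have : I₂ = 0 := by
        rw [hI₂, ← lintegral_zero]
        refine lintegral_congr_ae (hf0.mono fun t ht => ?_)
        simp [ht]
      rcases htop with h | h
      · exact (h0 ▸ h : (0:ℝ≥0∞) = ⊤) |> fun hh => by simp at hh
      · exact (this ▸ h : (0:ℝ≥0∞) = ⊤) |> fun hh => by simp at hh
    have hne2 : I₂ ≠ 0 := by
      intro h0
      have hf0 := hzero _ (hI₂ ▸ h0)
      have : I₁ = 0 := by
        rw [hI₁, ← lintegral_zero]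
        refine lintegral_congr_ae (hf0.mono fun t ht => ?_)
        simp [ht]
      rcases htop with h | h
      · exact (this ▸ h : (0:ℝ≥0∞) = ⊤) |> fun hh => by simp at hh
      · exact (h0 ▸ h : (0:ℝ≥0∞) = ⊤) |> fun hh => by simp at hh
    have hrhs : ENNReal.ofReal (2/κ) * I₁ ^ ((1:ℝ)/2) * I₂ ^ ((1:ℝ)/2) = ⊤ := by
      have hC : ENNReal.ofReal (2/κ) ≠ 0 := by
        simp only [ne_eq, ENNReal.ofReal_eq_zero, not_le]; positivity
      have h1ne : I₁ ^ ((1:ℝ)/2) ≠ 0 := by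
        simp only [ne_eq, ENNReal.rpow_eq_zero_iff, not_or]
        constructor
        · rintro ⟨h, _⟩; exact hne1 h
        · rintro ⟨_, h⟩; norm_num at h
      have h2ne : I₂ ^ ((1:ℝ)/2) ≠ 0 := by
        simp only [ne_eq, ENNReal.rpow_eq_zero_iff, not_or]
        constructor
        · rintro ⟨h, _⟩; exact hne2 h
        · rintro ⟨_, h⟩; norm_num at h
      rcases htop with h | h
      · rw [h, ENNReal.top_rpow_of_pos (by norm_num), ENNReal.mul_top hC,
          ENNReal.top_mul h2ne]
      · rw [h, ENNReal.top_rpow_of_pos (by norm_num), ENNReal.mul_top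
          (mul_ne_zero hC h1ne)]
    rw [hrhs]
    exact le_top
  push_neg at htop
  obtain ⟨h1top, h2top⟩ := htop
  -- key splitting bound
  have key : ∀ R : ℝ, 0 < R → (∫⁻ t in Ioi (0:ℝ), ENNReal.ofReal |deriv v t|) ≤
      ENNReal.ofReal (Real.sqrt (I₁.toReal * (R ^ (2*κ) / (2*κ))) +
        Real.sqrt (I₂.toReal * (R ^ (-(2*κ)) / (2*κ)))) := by
    intro R hR
    have hsplit : (∫⁻ t in Ioi (0:ℝ), ENNReal.ofReal |deriv v t|)
        = (∫⁻ t in Ioc (0:ℝ) R, ENNReal.ofReal |deriv v t|)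
          + ∫⁻ t in Ioi R, ENNReal.ofReal |deriv v t| := by
      rw [← lintegral_union measurableSet_Ioi (Ioc_disjoint_Ioi le_rfl),
        Ioc_union_Ioi_eq_Ioi hR.le]
    have b1 := cs_aux (s := Ioc (0:ℝ) R) hfm measurableSet_Ioc Ioc_subset_Ioi_self (1-2*κ)
    have b2 := cs_aux hfm measurableSet_Ioi
      (fun t (ht : t ∈ Ioi R) => hR.trans ht) (1+2*κ)
    have w1 : (∫⁻ t in Ioc (0:ℝ) R, ENNReal.ofReal (t ^ (-(1-2*κ))))
        = ENNReal.ofReal (R ^ (2*κ)/(2*κ)) := by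
      rw [w1_aux (by linarith) hR, show (-(1-2*κ)+1 : ℝ) = 2*κ by ring]
    have w2 : (∫⁻ t in Ioi R, ENNReal.ofReal (t ^ (-(1+2*κ))))
        = ENNReal.ofReal (R ^ (-(2*κ))/(2*κ)) := by
      rw [w2_aux (show (-(1+2*κ) : ℝ) < -1 by linarith) hR,
        show (-(1+2*κ)+1 : ℝ) = -(2*κ) by ring, neg_div_neg_eq]
    rw [w1] at b1
    rw [w2] at b2
    have m1 : (∫⁻ t in Ioc (0:ℝ) R, ENNReal.ofReal (t ^ (1-2*κ) * (deriv v t)^2)) ≤ I₁ :=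
      hI₁ ▸ lintegral_mono_set Ioc_subset_Ioi_self
    have m2 : (∫⁻ t in Ioi R, ENNReal.ofReal (t ^ (1+2*κ) * (deriv v t)^2)) ≤ I₂ :=
      hI₂ ▸ lintegral_mono_set (Ioi_subset_Ioi hR.le)
    have e1 : I₁ ^ ((1:ℝ)/2) * ENNReal.ofReal (R ^ (2*κ)/(2*κ)) ^ ((1:ℝ)/2)
        = ENNReal.ofReal (Real.sqrt (I₁.toReal * (R ^ (2*κ) / (2*κ)))) := by
      rw [← ENNReal.ofReal_toReal h1top,
        ENNReal.ofReal_rpow_of_nonneg ENNReal.toReal_nonneg (by norm_num),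
        ENNReal.ofReal_rpow_of_nonneg (by positivity) (by norm_num),
        ← ENNReal.ofReal_mul (by positivity),
        ← Real.sqrt_eq_rpow, ← Real.sqrt_eq_rpow,
        ← Real.sqrt_mul ENNReal.toReal_nonneg,
        ENNReal.toReal_ofReal ENNReal.toReal_nonneg]
    have e2 : I₂ ^ ((1:ℝ)/2) * ENNReal.ofReal (R ^ (-(2*κ))/(2*κ)) ^ ((1:ℝ)/2)
        = ENNReal.ofReal (Real.sqrt (I₂.toReal * (R ^ (-(2*κ)) / (2*κ)))) := by
      rw [← ENNReal.ofReal_toReal h2top,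
        ENNReal.ofReal_rpow_of_nonneg ENNReal.toReal_nonneg (by norm_num),
        ENNReal.ofReal_rpow_of_nonneg (by positivity) (by norm_num),
        ← ENNReal.ofReal_mul (by positivity),
        ← Real.sqrt_eq_rpow, ← Real.sqrt_eq_rpow,
        ← Real.sqrt_mul ENNReal.toReal_nonneg,
        ENNReal.toReal_ofReal ENNReal.toReal_nonneg]
    calc (∫⁻ t in Ioi (0:ℝ), ENNReal.ofReal |deriv v t|)
        = (∫⁻ t in Ioc (0:ℝ) R, ENNReal.ofReal |deriv v t|)
          + ∫⁻ t in Ioi R, ENNReal.ofReal |deriv v t| := hsplit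
      _ ≤ (∫⁻ t in Ioc (0:ℝ) R, ENNReal.ofReal (t ^ (1-2*κ) * (deriv v t)^2)) ^ ((1:ℝ)/2)
            * ENNReal.ofReal (R ^ (2*κ)/(2*κ)) ^ ((1:ℝ)/2)
          + (∫⁻ t in Ioi R, ENNReal.ofReal (t ^ (1+2*κ) * (deriv v t)^2)) ^ ((1:ℝ)/2)
            * ENNReal.ofReal (R ^ (-(2*κ))/(2*κ)) ^ ((1:ℝ)/2) := add_le_add b1 b2
      _ ≤ I₁ ^ ((1:ℝ)/2) * ENNReal.ofReal (R ^ (2*κ)/(2*κ)) ^ ((1:ℝ)/2)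
          + I₂ ^ ((1:ℝ)/2) * ENNReal.ofReal (R ^ (-(2*κ))/(2*κ)) ^ ((1:ℝ)/2) :=
          add_le_add
            (mul_le_mul_left (ENNReal.rpow_le_rpow m1 (by norm_num)) _)
            (mul_le_mul_left (ENNReal.rpow_le_rpow m2 (by norm_num)) _)
      _ = ENNReal.ofReal (Real.sqrt (I₁.toReal * (R ^ (2*κ) / (2*κ)))
            + Real.sqrt (I₂.toReal * (R ^ (-(2*κ)) / (2*κ)))) := by
          rw [e1, e2, ENNReal.ofReal_add (Real.sqrt_nonneg _) (Real.sqrt_nonneg _)]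
  -- integrability of deriv v on (0,∞)
  have hJfin : (∫⁻ t in Ioi (0:ℝ), ENNReal.ofReal |deriv v t|) ≠ ⊤ :=
    ne_top_of_le_ne_top ENNReal.ofReal_ne_top (key 1 one_pos)
  have hint : IntegrableOn (deriv v) (Ioi 0) := by
    refine ⟨hfm.aestronglyMeasurable, ?_⟩
    rw [hasFiniteIntegral_iff_norm]
    simp only [Real.norm_eq_abs]
    exact lt_of_le_of_ne le_top hJfin
  have hftc : |v y| ≤ ∫ t in Ioi (0:ℝ), |deriv v t| := ftc_aux hv hv0 hint hy
  have hJr : (∫ t in Ioi (0:ℝ), |deriv v t|)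
      = (∫⁻ t in Ioi (0:ℝ), ENNReal.ofReal |deriv v t|).toReal := by
    rw [← ofReal_integral_eq_lintegral_ofReal hint.abs
      ((ae_restrict_mem measurableSet_Ioi).mono fun t _ => abs_nonneg _),
      ENNReal.toReal_ofReal (integral_nonneg fun t => abs_nonneg _)]
  by_cases hz : I₁ = 0 ∨ I₂ = 0
  · -- derivative vanishes a.e., hence v y = 0
    have hf0 : deriv v =ᵐ[volume.restrict (Ioi (0:ℝ))] 0 := by
      rcases hz with h | h
      · exact hzero _ (hI₁ ▸ h)
      · exact hzero _ (hI₂ ▸ h)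
    have hJ0 : (∫⁻ t in Ioi (0:ℝ), ENNReal.ofReal |deriv v t|) = 0 := by
      rw [← lintegral_zero]
      refine lintegral_congr_ae (hf0.mono fun t ht => ?_)
      simp [ht]
    have hvy : v y = 0 := by
      have : |v y| ≤ 0 := by rw [hJ0] at hJr; simpa [hJr] using hftc
      exact abs_nonpos_iff.mp this
    simp [hvy]
  push_neg at hz
  obtain ⟨hz1, hz2⟩ := hz
  set a := I₁.toReal with ha'
  set b := I₂.toReal with hb'
  have ha : 0 < a := ENNReal.toReal_pos hz1 h1top
  have hb : 0 < b := ENNReal.toReal_pos hz2 h2top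
  set R := (b/a) ^ ((1:ℝ)/(4*κ)) with hRdef
  have hR : 0 < R := Real.rpow_pos_of_pos (div_pos hb ha) _
  have hRpow1 : R ^ (2*κ) = Real.sqrt b / Real.sqrt a := by
    rw [hRdef, ← Real.rpow_mul (div_pos hb ha).le,
      show 1/(4*κ)*(2*κ) = (1:ℝ)/2 by field_simp; ring,
      ← Real.sqrt_eq_rpow, Real.sqrt_div hb.le]
  have hRpow2 : R ^ (-(2*κ)) = Real.sqrt a / Real.sqrt b := by
    rw [Real.rpow_neg hR.le, hRpow1, inv_div]
  have e1 : a * (R ^ (2*κ) / (2*κ)) = Real.sqrt a * Real.sqrt b / (2*κ) := by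
    rw [hRpow1, show a * (Real.sqrt b / Real.sqrt a / (2*κ))
      = (a / Real.sqrt a) * Real.sqrt b / (2*κ) by ring, Real.div_sqrt]
  have e2 : b * (R ^ (-(2*κ)) / (2*κ)) = Real.sqrt a * Real.sqrt b / (2*κ) := by
    rw [hRpow2, show b * (Real.sqrt a / Real.sqrt b / (2*κ))
      = (b / Real.sqrt b) * Real.sqrt a / (2*κ) by ring, Real.div_sqrt]
    ring
  have hkey := key R hR
  rw [e1, e2] at hkey
  have h5 : |v y| ≤ Real.sqrt (Real.sqrt a * Real.sqrt b / (2*κ))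
      + Real.sqrt (Real.sqrt a * Real.sqrt b / (2*κ)) := by
    rw [hJr] at hftc
    exact hftc.trans (ENNReal.toReal_le_of_le_ofReal (by positivity) hkey)
  have h6 : (v y)^2 ≤ 2/κ * (Real.sqrt a * Real.sqrt b) := by
    have h7 : (v y)^2 ≤ (Real.sqrt (Real.sqrt a * Real.sqrt b / (2*κ))
        + Real.sqrt (Real.sqrt a * Real.sqrt b / (2*κ)))^2 := by
      rw [← sq_abs]
      exact pow_le_pow_left₀ (abs_nonneg _) h5 2
    have h8 : (Real.sqrt (Real.sqrt a * Real.sqrt b / (2*κ))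
        + Real.sqrt (Real.sqrt a * Real.sqrt b / (2*κ)))^2
        = 4 * (Real.sqrt a * Real.sqrt b / (2*κ)) := by
      rw [show Real.sqrt (Real.sqrt a * Real.sqrt b / (2*κ))
          + Real.sqrt (Real.sqrt a * Real.sqrt b / (2*κ))
          = 2 * Real.sqrt (Real.sqrt a * Real.sqrt b / (2*κ)) by ring,
        mul_pow, Real.sq_sqrt (by positivity)]
      ring
    rw [h8] at h7
    refine h7.trans (le_of_eq ?_)
    field_simp
    ring
  have hI1r : I₁ ^ ((1:ℝ)/2) = ENNReal.ofReal (Real.sqrt a) := by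
    rw [← ENNReal.ofReal_toReal h1top,
      ENNReal.ofReal_rpow_of_nonneg ENNReal.toReal_nonneg (by norm_num),
      ← Real.sqrt_eq_rpow, ha']
  have hI2r : I₂ ^ ((1:ℝ)/2) = ENNReal.ofReal (Real.sqrt b) := by
    rw [← ENNReal.ofReal_toReal h2top,
      ENNReal.ofReal_rpow_of_nonneg ENNReal.toReal_nonneg (by norm_num),
      ← Real.sqrt_eq_rpow, hb']
  rw [hI1r, hI2r, ← ENNReal.ofReal_mul (by positivity), ← ENNReal.ofReal_mul (by positivity),
    mul_assoc]
  exact ENNReal.ofReal_le_ofReal h6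
end
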